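/- arXiv:2402.05289 — 7 statements merged into one kernel-verified Lean document; each statement's English description precedes it below -/
import Mathlib

section
/- For every finite simple graph G with at least one vertex, if G admits an equitable k-coloring then k ≥ ω(G) and k ≥ ⌈(|V(G)|+1)/(α_min(G)+1)⌉; consequently the equitable chromatic number satisfies χ_=(G) ≥ max{ω(G), ⌈(|V(G)|+1)/(α_min(G)+1)⌉}. -/
open scoped BigOperators

namespace BlockGraphPaper

variable {V : Type*}

/-- `S` is an independent set of the graph `G`. -/
def IsIndepSet (G : SimpleGraph V) (S : Set V) : Prop :=
  S.Pairwise fun u v => ¬ G.Adj u v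

/-- The independence number `α(G)`: the largest size of an independent set. -/
noncomputable def alpha (G : SimpleGraph V) : ℕ :=
  sSup {n | ∃ S : Set V, IsIndepSet G S ∧ S.ncard = n}

/-- `α(G,v)`: the largest size of an independent set containing the vertex `v`. -/
noncomputable def alphaAt (G : SimpleGraph V) (v : V) : ℕ :=
  sSup {n | ∃ S : Set V, IsIndepSet G S ∧ v ∈ S ∧ S.ncard = n}

/-- `α_min(G) = min over vertices v of α(G,v)`. -/
noncomputable def alphaMin (G : SimpleGraph V) : ℕ :=
  ⨅ v : V, alphaAt G v

/-- The clique number `ω(G)`: the largest size of a clique. -/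
noncomputable def cliqueNum (G : SimpleGraph V) : ℕ :=
  sSup {n | ∃ S : Set V, G.IsClique S ∧ S.ncard = n}

/-- A set of vertices is 2-connected if it has at least 3 vertices, induces a
connected subgraph, and removal of any of its vertices keeps it connected
(i.e. it has no cut vertex). -/
def IsTwoConnectedSet (G : SimpleGraph V) (S : Set V) : Prop :=
  3 ≤ S.ncard ∧ (G.induce S).Connected ∧ ∀ v ∈ S, (G.induce (S \ {v})).Connected

/-- A block graph: every block (maximal 2-connected subgraph) is a clique;
equivalently, every 2-connected set of vertices is a clique. -/
def IsBlockGraph (G : SimpleGraph V) : Prop :=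
  ∀ S : Set V, IsTwoConnectedSet G S → G.IsClique S

/-- A vertex is simplicial if its neighborhood is a clique. -/
def IsSimplicial (G : SimpleGraph V) (w : V) : Prop :=
  G.IsClique (G.neighborSet w)

/-- A vertex is a cut vertex if its removal increases the number of
connected components. -/
def IsCutVertex (G : SimpleGraph V) (v : V) : Prop :=
  Nat.card G.ConnectedComponent < Nat.card (G.induce ({v}ᶜ : Set V)).ConnectedComponent

/-- A cluster graph: a disjoint union of complete graphs, i.e. every
connected component is a clique. -/
def IsClusterGraph (G : SimpleGraph V) : Prop :=
  ∀ u v : V, G.Reachable u v → u = v ∨ G.Adj u v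

/-- The distance to cluster `dc(G)`: the least number of vertices whose removal
yields a cluster graph. -/
noncomputable def dc (G : SimpleGraph V) : ℕ :=
  sInf {n | ∃ D : Set V, D.ncard = n ∧ IsClusterGraph (G.induce (Dᶜ : Set V))}

/-- A proper coloring of `G` with colors in `Fin k`. -/
def IsProperColoring (G : SimpleGraph V) {k : ℕ} (c : V → Fin k) : Prop :=
  ∀ u v : V, G.Adj u v → c u ≠ c v

/-- An equitable `k`-coloring: a proper coloring whose color classes differ
in size by at most one. -/
def IsEquitableColoring (G : SimpleGraph V) {k : ℕ} (c : V → Fin k) : Prop :=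
  IsProperColoring G c ∧
    ∀ i j : Fin k, {v | c v = i}.ncard ≤ {v | c v = j}.ncard + 1

/-- The equitable chromatic number `χ₌(G)`: the least `k` admitting an
equitable `k`-coloring. -/
noncomputable def eqChromNum (G : SimpleGraph V) : ℕ :=
  sInf {k : ℕ | ∃ c : V → Fin k, IsEquitableColoring G c}

/-- A maximal clique of a graph. -/
def IsMaximalClique (G : SimpleGraph V) (Q : Set V) : Prop :=
  G.IsClique Q ∧ ∀ R : Set V, G.IsClique R → Q ⊆ R → Q = R

/-- A pendant clique of a block graph: a maximal clique containing exactly one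
cut vertex. -/
def IsPendantClique (G : SimpleGraph V) (Q : Set V) : Prop :=
  IsMaximalClique G Q ∧ ∃! y, y ∈ Q ∧ IsCutVertex G y

/-- The closed neighborhood `N[x]` of a vertex. -/
def closedNbhd (G : SimpleGraph V) (x : V) : Set V :=
  insert x (G.neighborSet x)

/-- An AIS vertex: a vertex belonging to every maximum independent set. -/
def IsAIS (G : SimpleGraph V) (w : V) : Prop :=
  ∀ S : Set V, IsIndepSet G S → S.ncard = alpha G → w ∈ S

/-- A graph is a disjoint union of stars if every connected component has a
vertex adjacent to all other vertices of the component. -/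
def IsDisjointUnionOfStars (G : SimpleGraph V) : Prop :=
  ∀ comp : G.ConnectedComponent, ∃ u : V, G.connectedComponentMk u = comp ∧
    ∀ w : V, G.connectedComponentMk w = comp → w ≠ u → G.Adj u w

/-- The parameter sequence of a GLS block graph: flower `0` has parameter `B`
and flower `i+1` has parameter `a i`. -/
def glsPar (n B : ℕ) (a : Fin n → ℕ) : Fin (n + 1) → ℕ :=
  Fin.cases B a

/-- The vertex set of the GLS block graph `GLS(A,k,B)`: for each
`i : Fin (n+1)`, the flower `F(par i, k+1)` consists of a universal vertex
(`none`) together with `par i + 1` disjoint copies of `K_k`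
(vertex `some (c, p)` is vertex `p` of copy `c`). -/
abbrev GLSV (n k B : ℕ) (a : Fin n → ℕ) : Type :=
  Σ i : Fin (n + 1), Option (Fin (glsPar n B a i + 1) × Fin k)

/-- The GLS block graph `GLS(A,k,B)`: inside each flower the universal vertex
`⟨i, none⟩ = y_i` is joined to all other vertices of the flower and two
non-universal vertices are adjacent iff they lie in the same copy of `K_k`;
moreover `y_0` is joined to each `y_j`, `j = 1, …, n`. -/
def GLSGraph (n k B : ℕ) (a : Fin n → ℕ) : SimpleGraph (GLSV n k B a) :=
  SimpleGraph.fromRel (fun u v =>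
    (u.1 = v.1 ∧ (u.2 = none ∨ v.2 = none ∨
      ∃ c : ℕ, u.2.map (fun p => (p.1 : ℕ)) = some c ∧
               v.2.map (fun p => (p.1 : ℕ)) = some c)) ∨
    (u.2 = none ∧ v.2 = none ∧ (u.1 = 0 ∨ v.1 = 0)))

/-- The universal vertex `y_i` of the `i`-th flower of a GLS block graph. -/
def glsY (n k B : ℕ) (a : Fin n → ℕ) (i : Fin (n + 1)) : GLSV n k B a :=
  ⟨i, none⟩

/-- The graph `H` obtained from the GLS block graph by joining all the
universal vertices `y_0, y_1, …, y_n` into a clique. -/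
def GLSPlus (n k B : ℕ) (a : Fin n → ℕ) : SimpleGraph (GLSV n k B a) :=
  GLSGraph n k B a ⊔ SimpleGraph.fromRel (fun u v => u.2 = none ∧ v.2 = none)

theorem aux_bounds0 {V : Type*} [Fintype V] [Nonempty V]
    (G : SimpleGraph V) (k : ℕ) (c : V → Fin k) (hc : IsEquitableColoring G c) :
    cliqueNum G ≤ k ∧ (Fintype.card V + 1) ⌈/⌉ (alphaMin G + 1) ≤ k := by
  classical
  obtain ⟨hprop, heq⟩ := hc
  have hcardle : ∀ S : Set V, S.ncard ≤ Fintype.card V := by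
    intro S
    have := Set.ncard_le_ncard (Set.subset_univ S) Set.finite_univ
    simpa [Set.ncard_univ] using this
  constructor
  · -- clique bound
    have h0 : (0:ℕ) ∈ {n | ∃ S : Set V, G.IsClique S ∧ S.ncard = n} :=
      ⟨∅, by simp, by simp⟩
    apply csSup_le ⟨0, h0⟩
    rintro n ⟨S, hS, rfl⟩
    have hinj : Set.InjOn c S := by
      intro u hu w hw huw
      by_contra hne
      exact hprop u w (hS hu hw hne) huw
    calc S.ncard = (c '' S).ncard := (Set.ncard_image_of_injOn hinj).symm
      _ ≤ Fintype.card (Fin k) := by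
          have := Set.ncard_le_ncard (Set.subset_univ (c '' S)) Set.finite_univ
          simpa [Set.ncard_univ] using this
      _ = k := by simp
  · -- ceil bound
    -- minimizer of alphaAt
    have hmem : sInf (Set.range (alphaAt G)) ∈ Set.range (alphaAt G) :=
      Nat.sInf_mem (Set.range_nonempty _)
    have hmineq : alphaMin G = sInf (Set.range (alphaAt G)) := rfl
    obtain ⟨v, hv⟩ := hmem
    rw [← hmineq] at hv
    set i := c v with hi
    set f : Fin k → ℕ := fun j => {w | c w = j}.ncard with hf
    have hfi : f i ≤ alphaMin G := by
      have hSi : IsIndepSet G {w | c w = i} := by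
        intro u hu w hw hne hadj
        exact hprop u w hadj (hu.trans hw.symm)
      have hbdd : BddAbove {n | ∃ S : Set V, IsIndepSet G S ∧ v ∈ S ∧ S.ncard = n} := by
        refine ⟨Fintype.card V, ?_⟩
        rintro n ⟨S, -, -, rfl⟩
        exact hcardle S
      have : f i ≤ alphaAt G v := le_csSup hbdd ⟨{w | c w = i}, hSi, rfl, rfl⟩
      omega
    have hfj : ∀ j : Fin k, f j ≤ f i + 1 := fun j => heq j i
    have hsum : Fintype.card V = ∑ j : Fin k, f j := by
      have h1 : Fintype.card V =
          ∑ j : Fin k, (Finset.univ.filter (fun w => c w = j)).card := by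
        rw [← Finset.card_univ]
        exact Finset.card_eq_sum_card_fiberwise (fun x _ => Finset.mem_univ _)
      rw [h1]
      refine Finset.sum_congr rfl fun j _ => ?_
      rw [hf, ← Set.ncard_coe_finset]
      congr 1
      ext w; simp
    have key : Fintype.card V + 1 ≤ (alphaMin G + 1) * k := by
      have h2 : ∑ j : Fin k, (f j + if j = i then 1 else 0)
          ≤ ∑ _j : Fin k, (alphaMin G + 1) := by
        refine Finset.sum_le_sum fun j _ => ?_
        by_cases hji : j = i
        · subst hji; simp; omega
        · simp [hji]; have := hfj j; omega
      have h3 : ∑ j : Fin k, (f j + if j = i then 1 else 0)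
          = (∑ j : Fin k, f j) + 1 := by
        rw [Finset.sum_add_distrib]
        congr 1
        simp
      rw [hsum]
      calc (∑ j : Fin k, f j) + 1 = ∑ j : Fin k, (f j + if j = i then 1 else 0) := h3.symm
        _ ≤ ∑ _j : Fin k, (alphaMin G + 1) := h2
        _ = (alphaMin G + 1) * k := by simp [Finset.sum_const, mul_comm]
    exact (ceilDiv_le_iff_le_mul (Nat.succ_pos _)).2 key

theorem equitable_coloring_lower_bound {V : Type*} [Fintype V] [Nonempty V]
    (G : SimpleGraph V) :
    (∀ (k : ℕ) (c : V → Fin k), IsEquitableColoring G c →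
      cliqueNum G ≤ k ∧ (Fintype.card V + 1) ⌈/⌉ (alphaMin G + 1) ≤ k) ∧
    max (cliqueNum G) ((Fintype.card V + 1) ⌈/⌉ (alphaMin G + 1)) ≤ eqChromNum G := by
  classical
  refine ⟨fun k c hc => aux_bounds0 G k c hc, ?_⟩
  have hne : {k : ℕ | ∃ c : V → Fin k, IsEquitableColoring G c}.Nonempty := by
    refine ⟨Fintype.card V, fun w => (Fintype.equivFin V) w, ?_, ?_⟩
    · intro u w hadj huw
      exact hadj.ne ((Fintype.equivFin V).injective huw)
    · intro a b
      have h : ∀ j : Fin (Fintype.card V),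
          {w | (Fintype.equivFin V) w = j} = {(Fintype.equivFin V).symm j} := by
        intro j; ext w; simp [Equiv.apply_eq_iff_eq_symm_apply]
      rw [h a, h b]
      simp
  obtain ⟨c, hc⟩ := Nat.sInf_mem hne
  have := aux_bounds0 G _ c hc
  exact max_le this.1 this.2


end BlockGraphPaper
end

section
/- Let G be a block graph, let v be a cut vertex of G and let w be any simplicial vertex of G. Then α(G,v) ≤ α(G,w). -/
open scoped BigOperators

namespace BlockGraphPaper

variable {V : Type*}

theorem cutVertex_le_simplicial {V : Type*} [Fintype V] (G : SimpleGraph V)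
    (hG : IsBlockGraph G) (v : V) (hv : IsCutVertex G v)
    (w : V) (hw : IsSimplicial G w) :
    alphaAt G v ≤ alphaAt G w := by
  classical
  have hbdd : ∀ (x : V), BddAbove {n | ∃ S : Set V, IsIndepSet G S ∧ x ∈ S ∧ S.ncard = n} := by
    intro x
    refine ⟨Fintype.card V, ?_⟩
    rintro n ⟨S, -, -, rfl⟩
    calc S.ncard ≤ (Set.univ : Set V).ncard :=
          Set.ncard_le_ncard (Set.subset_univ S) Set.finite_univ
      _ = Fintype.card V := by simp [Set.ncard_univ, Nat.card_eq_fintype_card]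
  have hne : ({n | ∃ S : Set V, IsIndepSet G S ∧ v ∈ S ∧ S.ncard = n}).Nonempty :=
    ⟨1, {v}, by simp [IsIndepSet], by simp, by simp⟩
  have hmem := Nat.sSup_mem hne (hbdd v)
  obtain ⟨S, hS, hvS, hcard⟩ := hmem
  have hle : ∀ S' : Set V, IsIndepSet G S' → w ∈ S' →
      sSup {n | ∃ T : Set V, IsIndepSet G T ∧ v ∈ T ∧ T.ncard = n} ≤ S'.ncard →
      alphaAt G v ≤ alphaAt G w := by
    intro S' h1 h2 h3
    exact h3.trans (le_csSup (hbdd w) ⟨S', h1, h2, rfl⟩)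
  have hsymm : Symmetric fun u v : V => ¬ G.Adj u v :=
    fun a b h hab => h (G.adj_symm hab)
  by_cases hwS : w ∈ S
  · exact hle S hS hwS hcard.ge
  by_cases hN : ∃ u ∈ S, G.Adj w u
  · obtain ⟨u, huS, hwu⟩ := hN
    have huniq : ∀ x ∈ S, G.Adj w x → x = u := by
      intro x hxS hwx
      by_contra hxu
      exact hS hxS huS hxu (hw hwx hwu hxu)
    have hwnot : w ∉ S \ {u} := fun h => hwS h.1
    refine hle (insert w (S \ {u})) ?_ (Set.mem_insert _ _) ?_
    · rw [IsIndepSet, (haveI : Std.Symm (fun u v : V => ¬ G.Adj u v) := ⟨fun a b h => hsymm h⟩; Set.pairwise_insert_of_symm (r := fun u v : V => ¬ G.Adj u v))]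
      refine ⟨fun a ha b hb hab => hS ha.1 hb.1 hab, ?_⟩
      rintro x ⟨hxS, hxu⟩ - hadj
      exact hxu (huniq x hxS hadj)
    · rw [Set.ncard_insert_of_notMem hwnot (Set.toFinite _),
        Set.ncard_diff_singleton_add_one huS (Set.toFinite _), hcard]
  · push_neg at hN
    have hwnot : w ∉ S := hwS
    refine hle (insert w S) ?_ (Set.mem_insert _ _) ?_
    · rw [IsIndepSet, (haveI : Std.Symm (fun u v : V => ¬ G.Adj u v) := ⟨fun a b h => hsymm h⟩; Set.pairwise_insert_of_symm (r := fun u v : V => ¬ G.Adj u v))]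
      exact ⟨hS, fun x hxS _ hadj => hN x hxS hadj⟩
    · rw [Set.ncard_insert_of_notMem hwnot (Set.toFinite _), hcard]
      exact Nat.le_succ _

end BlockGraphPaper
end

section
/- For any block graph G that contains at least one cut vertex, there exists a cut vertex v of G such that α(G,v) = α_min(G); that is, the minimum of α(G,·) is attained at a cut vertex. -/
open scoped BigOperators

namespace BlockGraphPaper

variable {V : Type*}

lemma ncard_le_fincard [Fintype V] (S : Set V) : S.ncard ≤ Fintype.card V := by
  classical
  have := Set.ncard_le_ncard (Set.subset_univ S) Set.finite_univ
  simpa [Set.ncard_univ, Nat.card_eq_fintype_card] using this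

lemma alpha_bdd [Fintype V] (G : SimpleGraph V) :
    BddAbove {n | ∃ S : Set V, IsIndepSet G S ∧ S.ncard = n} := by
  refine ⟨Fintype.card V, ?_⟩
  rintro n ⟨S, _, rfl⟩
  exact ncard_le_fincard S

lemma alphaAt_bdd [Fintype V] (G : SimpleGraph V) (v : V) :
    BddAbove {n | ∃ S : Set V, IsIndepSet G S ∧ v ∈ S ∧ S.ncard = n} := by
  refine ⟨Fintype.card V, ?_⟩
  rintro n ⟨S, _, _, rfl⟩
  exact ncard_le_fincard S

lemma alpha_spec [Fintype V] (G : SimpleGraph V) :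
    ∃ S : Set V, IsIndepSet G S ∧ S.ncard = alpha G := by
  have hne : ({n | ∃ S : Set V, IsIndepSet G S ∧ S.ncard = n}).Nonempty :=
    ⟨0, ∅, Set.pairwise_empty _, by simp⟩
  have := Nat.sSup_mem hne (alpha_bdd G)
  exact this

lemma alphaAt_spec [Fintype V] (G : SimpleGraph V) (v : V) :
    ∃ S : Set V, IsIndepSet G S ∧ v ∈ S ∧ S.ncard = alphaAt G v := by
  have hne : ({n | ∃ S : Set V, IsIndepSet G S ∧ v ∈ S ∧ S.ncard = n}).Nonempty :=
    ⟨1, {v}, Set.pairwise_singleton _ _, Set.mem_singleton v, by simp⟩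
  exact Nat.sSup_mem hne (alphaAt_bdd G v)

lemma le_alpha [Fintype V] {G : SimpleGraph V} {S : Set V} (h : IsIndepSet G S) :
    S.ncard ≤ alpha G :=
  le_csSup (alpha_bdd G) ⟨S, h, rfl⟩

lemma le_alphaAt [Fintype V] {G : SimpleGraph V} {S : Set V} {v : V}
    (h : IsIndepSet G S) (hv : v ∈ S) : S.ncard ≤ alphaAt G v :=
  le_csSup (alphaAt_bdd G v) ⟨S, h, hv, rfl⟩

lemma alphaAt_le_alpha [Fintype V] (G : SimpleGraph V) (v : V) :
    alphaAt G v ≤ alpha G := by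
  obtain ⟨S, hS, _, hcard⟩ := alphaAt_spec G v
  exact hcard ▸ le_alpha hS

lemma alphaMin_le [Fintype V] (G : SimpleGraph V) (v : V) :
    alphaMin G ≤ alphaAt G v :=
  ciInf_le (OrderBot.bddBelow _) v

lemma alphaMin_attained [Fintype V] [Nonempty V] (G : SimpleGraph V) :
    ∃ v : V, alphaAt G v = alphaMin G := by
  have h : alphaMin G ∈ Set.range (fun v => alphaAt G v) := by
    rw [alphaMin, iInf]
    exact Nat.sInf_mem (Set.range_nonempty _)
  obtain ⟨v, hv⟩ := h
  exact ⟨v, hv⟩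

/-- A simplicial vertex attains the independence number. -/
lemma alpha_le_alphaAt_of_simplicial [Fintype V] {G : SimpleGraph V} {w : V}
    (h : IsSimplicial G w) : alpha G ≤ alphaAt G w := by
  classical
  obtain ⟨S, hS, hcard⟩ := alpha_spec G
  by_cases hw : w ∈ S
  · exact hcard ▸ le_alphaAt hS hw
  by_cases hT : ∃ x ∈ S, G.Adj w x
  · obtain ⟨x, hxS, hwx⟩ := hT
    set S' : Set V := insert w (S \ {x}) with hS'
    have hwS' : w ∉ S \ {x} := fun hc => hw hc.1
    have hindep : IsIndepSet G S' := by
      rw [hS', IsIndepSet, (letI : Std.Symm (fun u v : V => ¬ G.Adj u v) := ⟨fun a b hab => fun hba => hab hba.symm⟩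
        Set.pairwise_insert_of_symm_of_notMem hwS')]
      constructor
      · exact hS.mono Set.diff_subset
      · rintro u ⟨huS, hux⟩ hadj
        have : u ∈ G.neighborSet w := hadj
        have hx' : x ∈ G.neighborSet w := hwx
        by_cases hux' : u = x
        · exact hux hux'
        · exact hS huS hxS hux' (h this hx' hux')
    have hcard' : S'.ncard = S.ncard := by
      rw [hS', Set.ncard_insert_of_notMem hwS' ((S.toFinite.diff))]
      rw [Set.ncard_diff_singleton_of_mem hxS]
      have : 1 ≤ S.ncard := Set.ncard_pos S.toFinite |>.mpr ⟨x, hxS⟩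
      omega
    calc alpha G = S'.ncard := by rw [hcard', hcard]
      _ ≤ alphaAt G w := le_alphaAt hindep (Set.mem_insert _ _)
  · push_neg at hT
    exfalso
    have hindep : IsIndepSet G (insert w S) := by
      rw [IsIndepSet, (letI : Std.Symm (fun u v : V => ¬ G.Adj u v) := ⟨fun a b hab => fun hba => hab hba.symm⟩
        Set.pairwise_insert_of_symm_of_notMem hw)]
      exact ⟨hS, fun u huS => hT u huS⟩
    have := le_alpha hindep
    rw [Set.ncard_insert_of_notMem hw S.toFinite, hcard] at this
    omega

lemma helperA {G : SimpleGraph V} {a b v : V} (p : G.Walk a b) (hp : p.IsPath)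
    (hv : G.Adj v b) (hvp : v ∉ p.support) :
    (G.induce (insert v ({w | w ∈ p.support} \ {a}))).Connected := by
  cases p with
  | nil =>
    have : insert v ({w | w ∈ (SimpleGraph.Walk.nil : G.Walk a a).support} \ {a})
        = {w | w ∈ (SimpleGraph.Walk.nil : G.Walk v v).support} := by
      ext w; simp
    rw [this]
    exact (SimpleGraph.Walk.nil : G.Walk v v).connected_induce_support
  | cons h q =>
    have ha : a ∉ q.support := (SimpleGraph.Walk.cons_isPath_iff _ _ |>.mp hp).2
    have hset : insert v ({w | w ∈ (SimpleGraph.Walk.cons h q).support} \ {a})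
        = {v} ∪ {w | w ∈ q.support} := by
      ext w
      simp only [Set.mem_insert_iff, Set.mem_diff, Set.mem_setOf_eq,
        SimpleGraph.Walk.support_cons, List.mem_cons, Set.mem_singleton_iff,
        Set.mem_union]
      constructor
      · rintro (rfl | ⟨(rfl | hw), hne⟩)
        · exact Or.inl rfl
        · exact absurd rfl hne
        · exact Or.inr hw
      · rintro (rfl | hw)
        · exact Or.inl rfl
        · exact Or.inr ⟨Or.inr hw, fun h' => ha (h' ▸ hw)⟩
    rw [hset]
    have hb : b ∈ {w | w ∈ q.support} := q.end_mem_support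
    have hvone : v ∈ ({v} : Set V) := rfl
    have hcq := q.connected_induce_support
    have hcv := (SimpleGraph.Walk.nil : G.Walk v v).connected_induce_support
    have hs : ({v} : Set V) = {w | w ∈ (SimpleGraph.Walk.nil : G.Walk v v).support} := by
      ext w; simp
    exact SimpleGraph.connected_induce_union
      (hs ▸ hcv : (G.induce ({v} : Set V)).Connected).preconnected hcq.preconnected hvone hb hv

/-- If `v` is not a cut vertex, neighbors of `v` are connected in `G - v`. -/
lemma reachable_of_not_cut [Fintype V] {G : SimpleGraph V} {v x y : V}
    (hnc : ¬ IsCutVertex G v) (hx : G.Adj v x) (hy : G.Adj v y) :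
    (G.induce ({v}ᶜ : Set V)).Reachable
      ⟨x, Set.mem_compl_singleton_iff.mpr hx.ne'⟩
      ⟨y, Set.mem_compl_singleton_iff.mpr hy.ne'⟩ := by
  classical
  by_contra hcon
  apply hnc
  set G' := G.induce ({v}ᶜ : Set V) with hG'
  set φ : G'.ConnectedComponent → G.ConnectedComponent :=
    SimpleGraph.ConnectedComponent.map (SimpleGraph.Embedding.induce _).toHom with hφ
  have hmapmk : ∀ (w : ({v}ᶜ : Set V)),
      φ (G'.connectedComponentMk w) = G.connectedComponentMk w.1 := fun w => rfl
  have hsurj : Function.Surjective φ := by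
    intro c
    induction c using SimpleGraph.ConnectedComponent.ind with
    | _ w =>
      by_cases hwv : w = v
      · refine ⟨G'.connectedComponentMk ⟨x, Set.mem_compl_singleton_iff.mpr hx.ne'⟩, ?_⟩
        rw [hmapmk]
        exact SimpleGraph.ConnectedComponent.sound (hwv ▸ hx.reachable.symm)
      · exact ⟨G'.connectedComponentMk ⟨w, Set.mem_compl_singleton_iff.mpr hwv⟩, rfl⟩
  have hninj : ¬ Function.Injective φ := by
    intro hinj
    apply hcon
    have heq : φ (G'.connectedComponentMk ⟨x, Set.mem_compl_singleton_iff.mpr hx.ne'⟩)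
        = φ (G'.connectedComponentMk ⟨y, Set.mem_compl_singleton_iff.mpr hy.ne'⟩) := by
      rw [hmapmk, hmapmk]
      exact SimpleGraph.ConnectedComponent.sound (hx.reachable.symm.trans hy.reachable)
    exact SimpleGraph.ConnectedComponent.exact (hinj heq) -- may need adjust
  have hle : Nat.card G.ConnectedComponent ≤ Nat.card G'.ConnectedComponent :=
    Nat.card_le_card_of_surjective φ hsurj
  rcases lt_or_eq_of_le hle with hlt | heq
  · exact hlt
  · exact absurd (hsurj.bijective_of_nat_card_le (le_of_eq heq.symm)).injective hninj


lemma singleton_connected (G : SimpleGraph V) (v : V) :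
    (G.induce ({v} : Set V)).Connected := by
  have hs : ({v} : Set V) = {w | w ∈ (SimpleGraph.Walk.nil : G.Walk v v).support} := by
    ext w; simp
  rw [hs]
  exact (SimpleGraph.Walk.nil : G.Walk v v).connected_induce_support

lemma simplicial_of_not_cut [Fintype V] {G : SimpleGraph V} (hG : IsBlockGraph G)
    (v : V) (hnc : ¬ IsCutVertex G v) : IsSimplicial G v := by
  classical
  intro x hx y hy hxy
  by_contra hadj
  have hx' : G.Adj v x := hx
  have hy' : G.Adj v y := hy
  obtain ⟨q0⟩ := reachable_of_not_cut hnc hx' hy'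
  have hq := q0.toPath
  let P : G.Walk x y := hq.1.map (SimpleGraph.Embedding.induce ({v}ᶜ : Set V)).toHom
  have hP : P.IsPath := SimpleGraph.Walk.map_isPath_of_injective Subtype.val_injective hq.2
  have hvsup : v ∉ P.support := by
    show v ∉ (SimpleGraph.Walk.map _ hq.1).support
    rw [SimpleGraph.Walk.support_map]
    rintro hmem
    obtain ⟨⟨w, hw⟩, -, hwv⟩ := List.mem_map.mp hmem
    exact hw (show w ∈ ({v} : Set V) from hwv)
  set T : Set V := {w | w ∈ P.support} with hT
  set S : Set V := insert v T with hSdef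
  have hxT : x ∈ T := P.start_mem_support
  have hyT : y ∈ T := P.end_mem_support
  have hvT : v ∉ T := hvsup
  have h2c : IsTwoConnectedSet G S := by
    refine ⟨?_, ?_, ?_⟩
    · have hsub : ({v, x, y} : Set V) ⊆ S := by
        rintro w (rfl | rfl | rfl)
        · exact Set.mem_insert _ _
        · exact Set.mem_insert_of_mem _ hxT
        · exact Set.mem_insert_of_mem _ hyT
      have h3 : ({v, x, y} : Set V).ncard = 3 := by
        rw [Set.ncard_insert_of_notMem (by simp [hx'.ne, hy'.ne]) (Set.toFinite _),
          Set.ncard_insert_of_notMem (by simp [hxy]) (Set.toFinite _),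
          Set.ncard_singleton]
      calc (3 : ℕ) = ({v, x, y} : Set V).ncard := h3.symm
        _ ≤ S.ncard := Set.ncard_le_ncard hsub S.toFinite
    · have : S = {v} ∪ T := by rw [hSdef, Set.singleton_union]
      rw [this]
      exact SimpleGraph.connected_induce_union (singleton_connected G v).preconnected
        P.connected_induce_support.preconnected rfl hxT hx'
    · intro u huS
      by_cases hu : u = v
      · subst hu
        have : S \ {u} = T := by
          ext w; simp only [hSdef, Set.mem_diff, Set.mem_insert_iff,
            Set.mem_singleton_iff]
          constructor
          · rintro ⟨(rfl | hw), hne⟩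
            · exact absurd rfl hne
            · exact hw
          · intro hw; exact ⟨Or.inr hw, fun h => hvT (h ▸ hw)⟩
        rw [this]
        exact P.connected_induce_support
      · have huT : u ∈ T := huS.resolve_left hu
        have hu' : u ∈ P.support := huT
        set P1 := P.takeUntil u hu' with hP1
        set P2 := P.dropUntil u hu' with hP2
        have hp1 : P1.IsPath := hP.takeUntil hu'
        have hp2 : P2.IsPath := hP.dropUntil hu'
        have hv1 : v ∉ P1.reverse.support := by
          rw [SimpleGraph.Walk.support_reverse]
          intro hmem
          exact hvsup (SimpleGraph.Walk.support_takeUntil_subset _ _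
            (List.mem_reverse.mp hmem))
        have hv2 : v ∉ P2.support :=
          fun hmem => hvsup (SimpleGraph.Walk.support_dropUntil_subset _ _ hmem)
        have c1 := helperA P1.reverse hp1.reverse hx' hv1
        have c2 := helperA P2 hp2 hy' hv2
        have hsupp : ∀ w, w ∈ P.support ↔ w ∈ P1.support ∨ w ∈ P2.support := by
          intro w
          conv_lhs => rw [← SimpleGraph.Walk.take_spec P hu']
          exact SimpleGraph.Walk.mem_support_append_iff _ _
        have hset : S \ {u}
            = (insert v ({w | w ∈ P1.reverse.support} \ {u}))
              ∪ (insert v ({w | w ∈ P2.support} \ {u})) := by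
          ext w
          simp only [hSdef, hT, Set.mem_diff, Set.mem_insert_iff, Set.mem_setOf_eq,
            Set.mem_singleton_iff, Set.mem_union, SimpleGraph.Walk.support_reverse,
            List.mem_reverse, hsupp w]
          constructor
          · rintro ⟨(rfl | (h1 | h2)), hne⟩
            · exact Or.inl (Or.inl rfl)
            · exact Or.inl (Or.inr ⟨h1, hne⟩)
            · exact Or.inr (Or.inr ⟨h2, hne⟩)
          · rintro ((rfl | ⟨h1, hne⟩) | (rfl | ⟨h2, hne⟩))
            · exact ⟨Or.inl rfl, fun h => hu (h.symm)⟩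
            · exact ⟨Or.inr (Or.inl h1), hne⟩
            · exact ⟨Or.inl rfl, fun h => hu (h.symm)⟩
            · exact ⟨Or.inr (Or.inr h2), hne⟩
        rw [hset]
        exact SimpleGraph.induce_union_connected c1.preconnected c2.preconnected
          ⟨v, Set.mem_insert _ _, Set.mem_insert _ _⟩
  exact hadj (hG S h2c (Set.mem_insert_of_mem _ hxT) (Set.mem_insert_of_mem _ hyT) hxy)


theorem alphaMin_attained_at_cutVertex {V : Type*} [Fintype V] (G : SimpleGraph V)
    (hG : IsBlockGraph G) (hcut : ∃ u : V, IsCutVertex G u) :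
    ∃ v : V, IsCutVertex G v ∧ alphaAt G v = alphaMin G := by
  classical
  obtain ⟨u, hu⟩ := hcut
  have : Nonempty V := ⟨u⟩
  obtain ⟨v, hv⟩ := alphaMin_attained G
  by_cases hc : IsCutVertex G v
  · exact ⟨v, hc, hv⟩
  · refine ⟨u, hu, le_antisymm ?_ (alphaMin_le G u)⟩
    calc alphaAt G u ≤ alpha G := alphaAt_le_alpha G u
      _ ≤ alphaAt G v := alpha_le_alphaAt_of_simplicial (simplicial_of_not_cut hG v hc)
      _ = alphaMin G := hv

end BlockGraphPaper
end

section
/- For every block graph G, the distance to cluster satisfies dc(G) ≤ α_min(G). -/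
open scoped BigOperators

namespace BlockGraphPaper

variable {V : Type*}

section aux

variable {G : SimpleGraph V}

/-- Extract a walk in `G` from a walk in an induced subgraph, remembering membership. -/
lemma exists_walk_out {X : Set V} {u w : ↥X} (p : (G.induce X).Walk u w) :
    ∃ q : G.Walk u.1 w.1, ∀ z ∈ q.support, ∃ hz : z ∈ X, (⟨z, hz⟩ : ↥X) ∈ p.support := by
  induction p with
  | nil =>
    refine ⟨SimpleGraph.Walk.nil, ?_⟩
    intro z hz
    simp only [SimpleGraph.Walk.support_nil, List.mem_singleton] at hz
    subst hz
    exact ⟨Subtype.coe_prop _, by simp⟩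
  | @cons a b w h p ih =>
    obtain ⟨q, hq⟩ := ih
    refine ⟨SimpleGraph.Walk.cons h q, ?_⟩
    intro z hz
    change z ∈ (a : V) :: q.support at hz
    rw [List.mem_cons] at hz
    rcases hz with hz | hz
    · subst hz
      exact ⟨Subtype.coe_prop _, by simp⟩
    · obtain ⟨h1, h2⟩ := hq z hz
      exact ⟨h1, by simp [h2]⟩

/-- Transfer a walk in `G` whose support lies in `T` to reachability in `G.induce T`. -/
lemma reachable_induce_of_support {T : Set V} :
    ∀ {x y : V} (q : G.Walk x y) (h : ∀ z ∈ q.support, z ∈ T),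
      (G.induce T).Reachable ⟨x, h x q.start_mem_support⟩ ⟨y, h y q.end_mem_support⟩ := by
  intro x y q
  induction q with
  | nil => intro h; rfl
  | @cons a b c hadj p ih =>
    intro h
    have hb : b ∈ T := h b (by simp)
    have h1 : (G.induce T).Adj ⟨a, h a (by simp)⟩ ⟨b, hb⟩ := hadj
    have h2 := ih (fun z hz => h z (by rw [SimpleGraph.Walk.support_cons]; exact List.mem_cons_of_mem _ hz))
    exact h1.reachable.trans h2

/-- Transfer a walk in an induced subgraph whose support lies in `T` to `G.induce T`. -/
lemma reachable_induce_mono {X T : Set V} {x y : ↥X} (q : (G.induce X).Walk x y)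
    (h : ∀ z ∈ q.support, (z : V) ∈ T) (hx : (x : V) ∈ T) (hy : (y : V) ∈ T) :
    (G.induce T).Reachable ⟨x.1, hx⟩ ⟨y.1, hy⟩ := by
  obtain ⟨q', hq'⟩ := exists_walk_out q
  have hsub : ∀ z ∈ q'.support, z ∈ T := by
    intro z hz
    obtain ⟨h1, h2⟩ := hq' z hz
    exact h (⟨z, h1⟩ : ↥X) h2
  exact reachable_induce_of_support q' hsub

/-- Walk confinement: a walk starting in a set `T` closed except through `y` either
stays in `T` or reaches `y`. -/
lemma confine {X T : Set V} {y : V}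
    (hcl : ∀ t ∈ T, ∀ u ∈ X, G.Adj t u → u ∈ T ∨ u = y) :
    ∀ {u w : ↥X} (p : (G.induce X).Walk u w), (u : V) ∈ T →
      (∀ z ∈ p.support, (z : V) ∈ T) ∨
        ∃ hy : y ∈ X, (G.induce X).Reachable u ⟨y, hy⟩ := by
  intro u w p
  induction p with
  | nil =>
    intro hu; left; intro z hz
    simp only [SimpleGraph.Walk.support_nil, List.mem_singleton] at hz
    subst hz; exact hu
  | @cons a b c hadj p ih =>
    intro ha
    have hGadj : G.Adj (a : V) (b : V) := hadj
    rcases hcl _ ha _ b.2 hGadj with hbT | hby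
    · rcases ih hbT with hL | ⟨hy, hr⟩
      · left; intro z hz
        rw [SimpleGraph.Walk.support_cons, List.mem_cons] at hz
        rcases hz with hz | hz
        · subst hz; exact ha
        · exact hL z hz
      · exact Or.inr ⟨hy, hadj.reachable.trans hr⟩
    · right
      refine ⟨hby ▸ b.2, ?_⟩
      have hb : b = ⟨y, hby ▸ b.2⟩ := Subtype.ext hby
      exact hb ▸ hadj.reachable

/-- Any connected pair of distinct nonadjacent vertices yields an induced P3. -/
lemma exists_p3 {W : Type*} {H : SimpleGraph W} :
    ∀ {u w : W} (_ : H.Walk u w), u ≠ w → ¬H.Adj u w →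
      ∃ a b c, H.Adj a b ∧ H.Adj b c ∧ ¬H.Adj a c ∧ a ≠ c := by
  intro u w p
  induction p with
  | nil => intro h _; exact absurd rfl h
  | @cons u v w hadj p ih =>
    intro hne hnadj
    by_cases hvw : v = w
    · subst hvw; exact absurd hadj hnadj
    · by_cases havw : H.Adj v w
      · exact ⟨u, v, w, hadj, havw, hnadj, hne⟩
      · exact ih hvw havw

end aux


section sep

variable {G : SimpleGraph V}

/-- In a block graph, the endpoints of an induced P3 are separated by its center. -/
lemma sep (hG : IsBlockGraph G) {a b c : V} (hba : G.Adj b a) (hbc : G.Adj b c)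
    (hac : ¬G.Adj a c) (hane : a ≠ c) {X : Set V} (ha' : a ∈ X \ {b}) (hc' : c ∈ X \ {b}) :
    ¬ (G.induce (X \ {b})).Reachable ⟨a, ha'⟩ ⟨c, hc'⟩ := by
  classical
  intro hreach
  obtain ⟨p⟩ := hreach
  obtain ⟨q0, hq0⟩ := exists_walk_out p
  have hq0' : ∀ z ∈ q0.support, z ∈ X \ {b} := fun z hz => (hq0 z hz).1
  set q : G.Walk a c := q0.bypass with hqdef
  have hqp : q.IsPath := q0.bypass_isPath
  have hsup : ∀ z ∈ q.support, z ∈ X \ {b} := fun z hz => hq0' z (q0.support_bypass_subset hz)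
  have hbsup : b ∉ q.support := fun hb => (hsup b hb).2 rfl
  set S : Set V := insert b {z | z ∈ q.support} with hSdef
  have hsupS : ∀ z ∈ q.support, z ∈ S := fun z hz => Set.mem_insert_of_mem _ hz
  have haS : a ∈ S := hsupS a q.start_mem_support
  have hcS : c ∈ S := hsupS c q.end_mem_support
  have hbS : b ∈ S := Set.mem_insert _ _
  have hSfin : S.Finite := Set.Finite.insert _ (q.support.finite_toSet)
  -- key connectivity helper: for x off the support or on it, each z in support \ {x}
  -- reaches b in the induced graph on S \ {x}
  have hab : a ≠ b := hba.ne'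
  have hcb : c ≠ b := hbc.ne'
  have htc : IsTwoConnectedSet G S := by
    refine ⟨?_, ?_, ?_⟩
    · -- ncard ≥ 3
      have h3 : ({a, b, c} : Set V).ncard = 3 :=
        Set.ncard_eq_three.mpr ⟨a, b, c, hab, hane, fun h => hcb h.symm, rfl⟩
      have hsub : ({a, b, c} : Set V) ⊆ S := by
        intro z hz
        rcases hz with hz | hz | hz
        · exact hz ▸ haS
        · exact hz ▸ hbS
        · exact hz ▸ hcS
      calc 3 = ({a, b, c} : Set V).ncard := h3.symm
        _ ≤ S.ncard := Set.ncard_le_ncard hsub hSfin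
    · -- connected
      have hkey : ∀ z (hz : z ∈ S), (G.induce S).Reachable ⟨z, hz⟩ ⟨b, hbS⟩ := by
        intro z hz
        rcases hz with hz | hz
        · exact (Subtype.ext hz : (⟨z, _⟩ : ↥S) = ⟨b, hbS⟩) ▸ SimpleGraph.Reachable.refl _
        · -- z on support: prefix to a, then edge a-b
          have h1 : (G.induce S).Reachable ⟨a, haS⟩ ⟨z, Set.mem_insert_of_mem _ hz⟩ :=
            reachable_induce_of_support (q.takeUntil z hz)
              (fun y hy => hsupS y (q.support_takeUntil_subset hz hy))
          have h2 : (G.induce S).Adj ⟨a, haS⟩ ⟨b, hbS⟩ := hba.symm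
          exact h1.symm.trans h2.reachable
      haveI : Nonempty ↥S := ⟨⟨b, hbS⟩⟩
      exact ⟨fun z w => (hkey z.1 z.2).trans (hkey w.1 w.2).symm⟩
    · -- removing any vertex keeps it connected
      intro x hxS
      rcases hxS with hxb | hxsup
      · -- x = b : the rest is the path support
        have hax : a ∈ S \ {x} := by
          refine ⟨haS, ?_⟩
          intro h
          exact hab ((Set.mem_singleton_iff.mp h).trans hxb)
        have hkey : ∀ z (hz : z ∈ S \ {x}), (G.induce (S \ {x})).Reachable ⟨z, hz⟩
            ⟨a, hax⟩ := by
          intro z hz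
          have hzsup : z ∈ q.support := by
            rcases hz.1 with h | h
            · exact absurd (Set.mem_singleton_iff.mpr (h.trans hxb.symm)) hz.2
            · exact h
          have hrS : ∀ y ∈ (q.takeUntil z hzsup).support, y ∈ S \ {x} := by
            intro y hy
            refine ⟨hsupS y (q.support_takeUntil_subset hzsup hy), ?_⟩
            intro h
            have hyb : y = b := (Set.mem_singleton_iff.mp h).trans hxb
            exact hbsup (hyb ▸ q.support_takeUntil_subset hzsup hy)
          exact (reachable_induce_of_support (q.takeUntil z hzsup) hrS).symm
        haveI : Nonempty ↥(S \ {x}) := ⟨⟨a, hax⟩⟩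
        exact ⟨fun z w => (hkey z.1 z.2).trans (hkey w.1 w.2).symm⟩
      · -- x on the support
        have hxb : x ≠ b := fun h => hbsup (h ▸ hxsup)
        have hbS' : b ∈ S \ {x} := by
          refine ⟨hbS, ?_⟩
          intro h
          exact hxb (Set.mem_singleton_iff.mp h).symm
        have hkey : ∀ z (hz : z ∈ S \ {x}), (G.induce (S \ {x})).Reachable ⟨z, hz⟩ ⟨b, hbS'⟩ := by
          intro z hz
          rcases hz.1 with hzb | hzsup
          · exact (Subtype.ext hzb : (⟨z, hz⟩ : ↥(S \ {x})) = ⟨b, hbS'⟩) ▸ SimpleGraph.Reachable.refl _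
          · have hzx : z ≠ x := fun h => hz.2 (Set.mem_singleton_iff.mpr h)
            -- decompose q at z
            have hspec : (q.takeUntil z hzsup).append (q.dropUntil z hzsup) = q :=
              q.take_spec hzsup
            have hnd : q.support.Nodup := hqp.support_nodup
            have hsplit : q.support = (q.takeUntil z hzsup).support
                ++ (q.dropUntil z hzsup).support.tail := by
              rw [← SimpleGraph.Walk.support_append, hspec]
            by_cases hxt : x ∈ (q.takeUntil z hzsup).support
            · -- then x not in dropUntil; use walk z → c, then edge c-b
              have hxd : x ∉ (q.dropUntil z hzsup).support := by
                rw [SimpleGraph.Walk.support_eq_cons (q.dropUntil z hzsup)]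
                intro hmem
                rcases List.mem_cons.mp hmem with h | h
                · exact hzx h.symm
                · have hdisj : ((q.takeUntil z hzsup).support).Disjoint
                      ((q.dropUntil z hzsup).support.tail) :=
                    List.disjoint_of_nodup_append (hsplit ▸ hnd)
                  exact hdisj hxt h
              have hrS : ∀ y ∈ (q.dropUntil z hzsup).support, y ∈ S \ {x} := by
                intro y hy
                refine ⟨hsupS y (q.support_dropUntil_subset hzsup hy), ?_⟩
                intro h
                have hyx : y = x := h
                exact hxd (hyx ▸ hy)
              have h1 := reachable_induce_of_support (q.dropUntil z hzsup) hrS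
              have hcx : c ∈ S \ {x} := hrS c (q.dropUntil z hzsup).end_mem_support
              have h2 : (G.induce (S \ {x})).Adj ⟨c, hcx⟩ ⟨b, hbS'⟩ := hbc.symm
              exact (h1.trans h2.reachable : _)
            · -- x not in takeUntil; use walk a → z reversed, then edge a-b
              have hrS : ∀ y ∈ (q.takeUntil z hzsup).support, y ∈ S \ {x} := by
                intro y hy
                refine ⟨hsupS y (q.support_takeUntil_subset hzsup hy), ?_⟩
                intro h
                have hyx : y = x := h
                exact hxt (hyx ▸ hy)
              have h1 := reachable_induce_of_support (q.takeUntil z hzsup) hrS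
              have hax : a ∈ S \ {x} := hrS a (q.takeUntil z hzsup).start_mem_support
              have h2 : (G.induce (S \ {x})).Adj ⟨a, hax⟩ ⟨b, hbS'⟩ := hba.symm
              exact (h1.symm.trans h2.reachable : _)
        haveI : Nonempty ↥(S \ {x}) := ⟨⟨b, hbS'⟩⟩
        exact ⟨fun z w => (hkey z.1 z.2).trans (hkey w.1 w.2).symm⟩
  have hclique := hG S htc
  exact hac (hclique haS hcS hane)

end sep


section main

variable {G : SimpleGraph V}

/-- The component of `x` in `G.induce (A \ {b})`, packaged with its properties. -/
lemma comp_good {A : Set V} {b x : V} (hx : x ∈ A \ {b}) :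
    ∃ T : Set V, ∃ hxT : x ∈ T, T ⊆ A \ {b} ∧
      (∀ t, t ∈ T ↔ ∃ ht : t ∈ A \ {b}, (G.induce (A \ {b})).Reachable ⟨x, hx⟩ ⟨t, ht⟩) ∧
      (∀ t ∈ T, ∀ u ∈ A, G.Adj t u → u ∈ T ∨ u = b) ∧
      (∀ t (ht : t ∈ T), (G.induce T).Reachable ⟨t, ht⟩ ⟨x, hxT⟩) := by
  classical
  refine ⟨{t | ∃ ht : t ∈ A \ {b}, (G.induce (A \ {b})).Reachable ⟨x, hx⟩ ⟨t, ht⟩},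
    ⟨hx, SimpleGraph.Reachable.refl _⟩, ?_, fun t => Iff.rfl, ?_, ?_⟩
  · intro t ht
    exact ht.1
  · -- closure
    rintro t ⟨htA, htr⟩ u huA hadj
    by_cases hub : u = b
    · exact Or.inr hub
    · left
      have hu' : u ∈ A \ {b} := ⟨huA, hub⟩
      have : (G.induce (A \ {b})).Adj ⟨t, htA⟩ ⟨u, hu'⟩ := hadj
      exact ⟨hu', htr.trans this.reachable⟩
  · -- connectivity within the component
    rintro t ⟨htA, htr⟩
    obtain ⟨p⟩ := htr
    have hsup : ∀ z ∈ p.support, (z : V) ∈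
        {t | ∃ ht : t ∈ A \ {b}, (G.induce (A \ {b})).Reachable ⟨x, hx⟩ ⟨t, ht⟩} := by
      intro z hz
      exact ⟨z.2, ⟨p.takeUntil z hz⟩⟩
    exact (reachable_induce_mono p hsup ⟨hx, SimpleGraph.Reachable.refl _⟩
      ⟨htA, ⟨p⟩⟩).symm

/-- The good-pair predicate for the inner minimality argument. -/
def Good (G : SimpleGraph V) (A : Set V) (v y : V) (T : Set V) : Prop :=
  y ∈ A ∧ y ≠ v ∧ T.Nonempty ∧ T ⊆ A \ {y} ∧ v ∉ T ∧
  (∀ t ∈ T, ∀ u ∈ A, G.Adj t u → u ∈ T ∨ u = y) ∧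
  ∃ t0, ∃ ht0 : t0 ∈ T, G.Adj y t0 ∧
    ∀ t (ht : t ∈ T), (G.induce T).Reachable ⟨t, ht⟩ ⟨t0, ht0⟩


/-- A minimal good pair yields a pendant clique. -/
lemma good_min_clique [Fintype V] (hG : IsBlockGraph G) {A : Set V} {v y : V} {T : Set V}
    (hgood : Good G A v y T)
    (hmin : ∀ y' T', Good G A v y' T' → T.ncard ≤ T'.ncard) :
    G.IsClique (insert y T) := by
  classical
  obtain ⟨hyA, hyv, hTne, hTsub, hvT, hclT, t0, ht0, hyt0, hconn⟩ := hgood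
  set Q : Set V := insert y T with hQdef
  have hQA : Q ⊆ A := by
    intro z hz
    rcases hz with hz | hz
    · exact hz ▸ hyA
    · exact (hTsub hz).1
  have ht0Q : t0 ∈ Q := Set.mem_insert_of_mem _ ht0
  have hyQ : y ∈ Q := Set.mem_insert _ _
  have hreachQ : ∀ w (hw : w ∈ Q), (G.induce Q).Reachable ⟨w, hw⟩ ⟨t0, ht0Q⟩ := by
    intro w hw
    by_cases hwT : w ∈ T
    · obtain ⟨p⟩ := hconn w hwT
      exact reachable_induce_mono p (fun z _ => Set.mem_insert_of_mem _ z.2)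
        (Set.mem_insert_of_mem _ hwT) ht0Q
    · have hwy : w = y := by
        rcases hw with h | h
        · exact h
        · exact absurd h hwT
      have hadj : (G.induce Q).Adj ⟨w, hw⟩ ⟨t0, ht0Q⟩ := by
        show G.Adj w t0
        rw [hwy]; exact hyt0
      exact hadj.reachable
  intro x hx z hz hne
  by_contra hnadj
  have hne' : (⟨x, hx⟩ : ↥Q) ≠ ⟨z, hz⟩ := fun h => hne (Subtype.ext_iff.mp h)
  have hnadj' : ¬(G.induce Q).Adj ⟨x, hx⟩ ⟨z, hz⟩ := hnadj
  obtain ⟨p⟩ := (hreachQ x hx).trans (hreachQ z hz).symm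
  obtain ⟨a', b', c', h1, h2, h3, h4⟩ := exists_p3 p hne' hnadj'
  have hba : G.Adj (b' : V) (a' : V) := h1.symm
  have hbc : G.Adj (b' : V) (c' : V) := h2
  have hac : ¬G.Adj (a' : V) (c' : V) := h3
  have hane : (a' : V) ≠ (c' : V) := fun h => h4 (Subtype.ext h)
  -- the center b' must lie in T
  have hbT : (b' : V) ∈ T := by
    rcases b'.2 with hby | hbT
    · -- b' = y : contradiction via sep in ambient A with center y
      exfalso
      have haT : (a' : V) ∈ T := by
        rcases a'.2 with h | h
        · exact absurd (h.trans hby.symm) hba.ne'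
        · exact h
      have hcT : (c' : V) ∈ T := by
        rcases c'.2 with h | h
        · exact absurd (h.trans hby.symm) hbc.ne'
        · exact h
      have hreachT : (G.induce (A \ {y})).Reachable
          ⟨(a' : V), hTsub haT⟩ ⟨(c' : V), hTsub hcT⟩ := by
        obtain ⟨p1⟩ := hconn _ haT
        obtain ⟨p2⟩ := hconn _ hcT
        exact ((reachable_induce_mono p1 (fun w _ => hTsub w.2) (hTsub haT)
          (hTsub ht0))).trans
          ((reachable_induce_mono p2 (fun w _ => hTsub w.2) (hTsub hcT)
          (hTsub ht0))).symm
      exact sep hG (hby ▸ hba) (hby ▸ hbc) hac hane (hTsub haT) (hTsub hcT) hreachT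
    · exact hbT
  have hbA : (b' : V) ∈ A := (hTsub hbT).1
  have hbny : (b' : V) ≠ y := fun h => (hTsub hbT).2 (Set.mem_singleton_iff.mpr h)
  have hbnv : (b' : V) ≠ v := fun h => hvT (h ▸ hbT)
  have haAb : (a' : V) ∈ A \ {(b' : V)} :=
    ⟨hQA a'.2, fun h => hba.ne' (Set.mem_singleton_iff.mp h)⟩
  have hcAb : (c' : V) ∈ A \ {(b' : V)} :=
    ⟨hQA c'.2, fun h => hbc.ne' (Set.mem_singleton_iff.mp h)⟩
  have hyAb : y ∈ A \ {(b' : V)} :=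
    ⟨hyA, fun h => hbny (Set.mem_singleton_iff.mp h).symm⟩
  have hsepb : ¬(G.induce (A \ {(b' : V)})).Reachable ⟨(a' : V), haAb⟩ ⟨(c' : V), hcAb⟩ :=
    sep hG hba hbc hac hane haAb hcAb
  -- build a smaller good pair from a side of b' not containing y
  have build : ∀ s : V, ∀ hs : s ∈ A \ {(b' : V)}, s ∈ Q → G.Adj (b' : V) s →
      ¬(G.induce (A \ {(b' : V)})).Reachable ⟨y, hyAb⟩ ⟨s, hs⟩ → False := by
    intro s hs hsQ hadj hnr
    have hsT : s ∈ T := by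
      rcases hsQ with h | h
      · exfalso; subst h; exact hnr (SimpleGraph.Reachable.refl _)
      · exact h
    obtain ⟨T', hxT', hT'sub, hchar, hcl', hconn'⟩ := comp_good (G := G) hs
    have hT'T : T' ⊆ T := by
      intro t ht
      obtain ⟨htA, hr⟩ := (hchar t).mp ht
      obtain ⟨p⟩ := hr
      rcases confine (X := A \ {(b' : V)}) (T := T) (y := y)
          (fun t' ht' u hu hadj' => hclT t' ht' u hu.1 hadj') p hsT with hL | ⟨hy', hr'⟩
      · exact hL ⟨t, htA⟩ p.end_mem_support
      · exact absurd hr'.symm (by exact hnr)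
    have hgood' : Good G A v (b' : V) T' := by
      refine ⟨hbA, hbnv, ⟨s, hxT'⟩, hT'sub, fun h => hvT (hT'T h), hcl', s, hxT', hadj, hconn'⟩
    have hlt : T'.ncard < T.ncard := by
      refine Set.ncard_lt_ncard ⟨hT'T, ?_⟩ (Set.toFinite T)
      intro hsub
      exact ((hT'sub (hsub hbT)).2 : (b' : V) ∉ {(b' : V)}) rfl
    exact absurd (hmin _ _ hgood') (Nat.not_le.mpr hlt)
  by_cases hra : (G.induce (A \ {(b' : V)})).Reachable ⟨y, hyAb⟩ ⟨(a' : V), haAb⟩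
  · by_cases hrc : (G.induce (A \ {(b' : V)})).Reachable ⟨y, hyAb⟩ ⟨(c' : V), hcAb⟩
    · exact hsepb (hra.symm.trans hrc)
    · exact build _ hcAb c'.2 hbc hrc
  · exact build _ haAb a'.2 hba hra


/-- The main inductive lemma: in a block graph, one can delete a set `D` no larger
than some independent set through `v` so that the rest is a cluster graph. -/
lemma key [Fintype V] (hG : IsBlockGraph G) :
    ∀ (n : ℕ) (A : Set V), A.ncard ≤ n → ∀ v ∈ A,
      ∃ D S : Set V, D ⊆ A ∧ S ⊆ A ∧ IsIndepSet G S ∧ v ∈ S ∧ D.ncard ≤ S.ncard ∧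
        IsClusterGraph (G.induce (A \ D)) := by
  classical
  intro n
  induction n with
  | zero =>
    intro A hA v hv
    have hA0 : A = ∅ := (Set.ncard_eq_zero (Set.toFinite A)).mp (Nat.le_zero.mp hA)
    exact absurd hv (hA0 ▸ Set.notMem_empty v)
  | succ n IH =>
    intro A hA v hv
    by_cases hclv : IsClusterGraph (G.induce (A \ {v}))
    · exact ⟨{v}, {v}, Set.singleton_subset_iff.mpr hv, Set.singleton_subset_iff.mpr hv,
        Set.pairwise_singleton _ _, Set.mem_singleton v, le_refl _, hclv⟩
    · -- extract an induced P3 avoiding v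
      rw [IsClusterGraph] at hclv
      push_neg at hclv
      obtain ⟨u0, w0, hr0, hne0, hnadj0⟩ := hclv
      obtain ⟨p0⟩ := hr0
      obtain ⟨a', b', c', h1, h2, h3, h4⟩ := exists_p3 p0 hne0 hnadj0
      have hba : G.Adj (b' : V) (a' : V) := h1.symm
      have hbc : G.Adj (b' : V) (c' : V) := h2
      have hac : ¬G.Adj (a' : V) (c' : V) := h3
      have hane : (a' : V) ≠ (c' : V) := fun h => h4 (Subtype.ext h)
      have hbA : (b' : V) ∈ A := b'.2.1
      have hbnv : (b' : V) ≠ v := fun h => b'.2.2 (Set.mem_singleton_iff.mpr h)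
      have haAb : (a' : V) ∈ A \ {(b' : V)} :=
        ⟨a'.2.1, fun h => hba.ne' (Set.mem_singleton_iff.mp h)⟩
      have hcAb : (c' : V) ∈ A \ {(b' : V)} :=
        ⟨c'.2.1, fun h => hbc.ne' (Set.mem_singleton_iff.mp h)⟩
      have hvAb : v ∈ A \ {(b' : V)} :=
        ⟨hv, fun h => hbnv (Set.mem_singleton_iff.mp h).symm⟩
      have hsepb : ¬(G.induce (A \ {(b' : V)})).Reachable ⟨(a' : V), haAb⟩
          ⟨(c' : V), hcAb⟩ := sep hG hba hbc hac hane haAb hcAb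
      -- build a good pair from a side of b' not containing v
      have build : ∀ s : V, ∀ hs : s ∈ A \ {(b' : V)}, G.Adj (b' : V) s →
          ¬(G.induce (A \ {(b' : V)})).Reachable ⟨v, hvAb⟩ ⟨s, hs⟩ →
          ∃ y T, Good G A v y T := by
        intro s hs hadj hnr
        obtain ⟨T, hxT, hTsub, hchar, hcl', hconn'⟩ := comp_good (G := G) hs
        refine ⟨(b' : V), T, hbA, hbnv, ⟨s, hxT⟩, hTsub, ?_, hcl', s, hxT, hadj, hconn'⟩
        intro hvT
        obtain ⟨hvA, hr⟩ := (hchar v).mp hvT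
        exact hnr hr.symm
      have hNN : ∃ y T, Good G A v y T := by
        by_cases hra : (G.induce (A \ {(b' : V)})).Reachable ⟨v, hvAb⟩ ⟨(a' : V), haAb⟩
        · by_cases hrc : (G.induce (A \ {(b' : V)})).Reachable ⟨v, hvAb⟩ ⟨(c' : V), hcAb⟩
          · exact absurd (hra.symm.trans hrc) hsepb
          · exact build _ hcAb hbc hrc
        · exact build _ haAb hba hra
      -- take a minimal good pair
      set NN : Set ℕ := {m | ∃ y T, Good G A v y T ∧ T.ncard = m} with hNNdef
      have hNNne : NN.Nonempty := by
        obtain ⟨y, T, hg⟩ := hNN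
        exact ⟨T.ncard, y, T, hg, rfl⟩
      obtain ⟨y, T, hgood, hcardT⟩ := Nat.sInf_mem hNNne
      have hmin : ∀ y' T', Good G A v y' T' → T.ncard ≤ T'.ncard := by
        intro y' T' hg
        rw [hcardT]
        exact Nat.sInf_le ⟨y', T', hg, rfl⟩
      have hclique : G.IsClique (insert y T) := good_min_clique hG hgood hmin
      obtain ⟨hyA, hyv, hTne, hTsub, hvT, hclT, t0, ht0, hyt0, hconn⟩ := hgood
      set Q : Set V := insert y T with hQdef
      have hQA : Q ⊆ A := by
        intro z hz
        rcases hz with hz | hz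
        · exact hz ▸ hyA
        · exact (hTsub hz).1
      have hvQ : v ∉ Q := by
        intro h
        rcases h with h | h
        · exact hyv h.symm
        · exact hvT h
      -- recurse on A \ Q
      have hAQlt : (A \ Q).ncard < A.ncard := by
        refine Set.ncard_lt_ncard ⟨Set.diff_subset, ?_⟩ (Set.toFinite A)
        intro hsub
        exact (hsub hyA).2 (Set.mem_insert _ _)
      have hAQ : (A \ Q).ncard ≤ n := Nat.lt_succ_iff.mp (lt_of_lt_of_le hAQlt hA)
      obtain ⟨D', S', hD'sub, hS'sub, hS'ind, hvS', hDS', hclus'⟩ :=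
        IH (A \ Q) hAQ v ⟨hv, hvQ⟩
      have hyD' : y ∉ D' := fun h => (hD'sub h).2 (Set.mem_insert _ _)
      have ht0S' : t0 ∉ S' := fun h => (hS'sub h).2 (Set.mem_insert_of_mem _ ht0)
      refine ⟨insert y D', insert t0 S', ?_, ?_, ?_, Set.mem_insert_of_mem _ hvS', ?_, ?_⟩
      · intro z hz
        rcases hz with hz | hz
        · exact hz ▸ hyA
        · exact (hD'sub hz).1
      · intro z hz
        rcases hz with hz | hz
        · exact hz ▸ (hTsub ht0).1
        · exact (hS'sub hz).1
      · -- independence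
        haveI : Std.Symm (fun u₁ u₂ => ¬G.Adj u₁ u₂) := ⟨fun u₁ u₂ h ha => h ha.symm⟩
        rw [IsIndepSet, Set.pairwise_insert_of_symm]
        refine ⟨hS'ind, ?_⟩
        intro s hsS' _ hadj
        rcases hclT t0 ht0 s (hS'sub hsS').1 hadj with h | h
        · exact (hS'sub hsS').2 (Set.mem_insert_of_mem _ h)
        · exact (hS'sub hsS').2 (h ▸ Set.mem_insert _ _)
      · rw [Set.ncard_insert_of_notMem hyD' (Set.toFinite D'),
          Set.ncard_insert_of_notMem ht0S' (Set.toFinite S')]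
        omega
      · -- cluster graph after deletion
        set X : Set V := A \ insert y D' with hXdef
        have hyX : y ∉ X := fun h => h.2 (Set.mem_insert _ _)
        have hTX : T ⊆ X := by
          intro t ht
          refine ⟨(hTsub ht).1, ?_⟩
          intro h
          rcases h with h | h
          · exact (hTsub ht).2 (Set.mem_singleton_iff.mpr h)
          · exact (hD'sub h).2 (Set.mem_insert_of_mem _ ht)
        have hXsplit : ∀ z : V, z ∈ X ∧ z ∉ T → z ∈ (A \ Q) \ D' := by
          rintro z ⟨⟨hzA, hz2⟩, hzT⟩
          refine ⟨⟨hzA, ?_⟩, fun h => hz2 (Set.mem_insert_of_mem _ h)⟩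
          intro hzQ
          rcases hzQ with h | h
          · exact hz2 (Set.mem_insert_iff.mpr (Or.inl h))
          · exact hzT h
        intro u1 u2 hr
        obtain ⟨p⟩ := hr
        by_cases hu1T : (u1 : V) ∈ T
        · rcases confine (X := X) (T := T) (y := y)
            (fun t ht u hu hadj => hclT t ht u hu.1 hadj) p hu1T with hL | ⟨hy', _⟩
          · have hu2T : (u2 : V) ∈ T := hL u2 p.end_mem_support
            by_cases heq : (u1 : V) = (u2 : V)
            · exact Or.inl (Subtype.ext heq)
            · exact Or.inr (hclique (Set.mem_insert_of_mem _ hu1T)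
                (Set.mem_insert_of_mem _ hu2T) heq)
          · exact absurd hy' hyX
        · rcases confine (X := X) (T := {z | z ∈ X ∧ z ∉ T}) (y := y)
            (fun t ht u hu hadj => by
              refine Or.inl ⟨hu, ?_⟩
              intro huT
              rcases hclT u huT t ht.1.1 hadj.symm with h | h
              · exact ht.2 h
              · exact hyX (h ▸ ht.1)) p ⟨u1.2, hu1T⟩ with hL | ⟨hy', _⟩
          · have hsub : ∀ z ∈ p.support, (z : V) ∈ (A \ Q) \ D' :=
              fun z hz => hXsplit z (hL z hz)
            have hru : ((A \ Q) \ D' : Set V) → True := fun _ => trivial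
            have hr' := reachable_induce_mono p hsub
              (hXsplit _ ⟨u1.2, hu1T⟩)
              (hXsplit _ (hL u2 p.end_mem_support))
            rcases hclus' _ _ hr' with h | h
            · have hcoe := Subtype.ext_iff.mp h
              exact Or.inl (Subtype.ext hcoe)
            · exact Or.inr h
          · exact absurd hy' hyX



end main

theorem dc_le_alphaMin {V : Type*} [Fintype V] (G : SimpleGraph V)
    (hG : IsBlockGraph G) :
    dc G ≤ alphaMin G := by
  classical
  by_cases hV : Nonempty V
  · haveI := hV
    rw [alphaMin]
    refine le_ciInf ?_
    intro v
    obtain ⟨D, S, hD, hS, hind, hvS, hDS, hclus⟩ := key hG (Fintype.card V) Set.univ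
      (by rw [Set.ncard_univ, Nat.card_eq_fintype_card]) v (Set.mem_univ v)
    have h1 : dc G ≤ D.ncard := by
      refine Nat.sInf_le ⟨D, rfl, ?_⟩
      rw [Set.compl_eq_univ_diff]
      exact hclus
    have h2 : S.ncard ≤ alphaAt G v := by
      refine le_csSup ⟨Fintype.card V, ?_⟩ ⟨S, hind, hvS, rfl⟩
      rintro m ⟨S', _, _, rfl⟩
      calc S'.ncard ≤ (Set.univ : Set V).ncard :=
            Set.ncard_le_ncard (Set.subset_univ _) Set.finite_univ
        _ = Fintype.card V := by rw [Set.ncard_univ, Nat.card_eq_fintype_card]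
    exact h1.trans (hDS.trans h2)
  · haveI : IsEmpty V := not_nonempty_iff.mp hV
    have h0 : (0 : ℕ) ∈ {n | ∃ D : Set V, D.ncard = n ∧
        IsClusterGraph (G.induce ((D : Set V)ᶜ : Set V))} :=
      ⟨∅, Set.ncard_empty _, fun u _ _ => isEmptyElim u.1⟩
    exact le_trans (Nat.sInf_le h0) (Nat.zero_le _)

end BlockGraphPaper
end

section
/- Let G be a block graph and let w be a vertex of G. If w is an isolated vertex, then w is an AIS vertex. Moreover, if w has degree d ≥ 1 with neighbors w_1, …, w_d, then w is an AIS vertex if and only if α(G − N[w]) > α(G − N[w_j]) for every j = 1, …, d. -/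
open scoped BigOperators

namespace BlockGraphPaper

variable {V : Type*}

section Aux

variable [Finite V] {G : SimpleGraph V}

lemma symm_not_adj (G : SimpleGraph V) : Symmetric (fun u v : V => ¬ G.Adj u v) :=
  fun _ _ h h' => h h'.symm

lemma bddAbove_indepCards (G : SimpleGraph V) :
    BddAbove {n | ∃ S : Set V, IsIndepSet G S ∧ S.ncard = n} := by
  refine ⟨Nat.card V, ?_⟩
  rintro n ⟨S, -, rfl⟩
  simpa [Set.ncard_univ] using Set.ncard_le_ncard (Set.subset_univ S) Set.finite_univ

lemma ncard_le_alpha {S : Set V} (h : IsIndepSet G S) : S.ncard ≤ alpha G :=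
  le_csSup (bddAbove_indepCards G) ⟨S, h, rfl⟩

lemma exists_max_indep (G : SimpleGraph V) :
    ∃ S : Set V, IsIndepSet G S ∧ S.ncard = alpha G := by
  have hne : {n | ∃ S : Set V, IsIndepSet G S ∧ S.ncard = n}.Nonempty :=
    ⟨0, ∅, Set.pairwise_empty _, by simp⟩
  exact Nat.sSup_mem hne (bddAbove_indepCards G)

lemma indep_image {A : Set V} {S : Set ↥A}
    (h : IsIndepSet (G.induce A) S) : IsIndepSet G (Subtype.val '' S) := by
  rintro _ ⟨u, hu, rfl⟩ _ ⟨v, hv, rfl⟩ hne hadj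
  exact h hu hv (fun e => hne (congrArg _ e)) hadj

lemma ncard_le_alpha_induce {A : Set V} {T : Set V}
    (hT : IsIndepSet G T) (hTA : T ⊆ A) : T.ncard ≤ alpha (G.induce A) := by
  classical
  set S : Set ↥A := Subtype.val ⁻¹' T with hS
  have himg : Subtype.val '' S = T := by
    ext x
    simp only [hS, Set.mem_image, Set.mem_preimage]
    constructor
    · rintro ⟨y, hy, rfl⟩; exact hy
    · intro hx; exact ⟨⟨x, hTA hx⟩, hx, rfl⟩
  have hcard : S.ncard = T.ncard := by
    rw [← himg, Set.ncard_image_of_injective _ Subtype.val_injective]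
  have hSindep : IsIndepSet (G.induce A) S := by
    intro u hu v hv hne hadj
    exact hT hu hv (fun e => hne (Subtype.val_injective e)) hadj
  calc T.ncard = S.ncard := hcard.symm
    _ ≤ alpha (G.induce A) := ncard_le_alpha hSindep

lemma alpha_del_add_one_le (G : SimpleGraph V) (v : V) :
    alpha (G.induce ((closedNbhd G v)ᶜ : Set V)) + 1 ≤ alpha G := by
  obtain ⟨T, hTindep, hTcard⟩ := exists_max_indep (G.induce ((closedNbhd G v)ᶜ : Set V))
  have hvnot : ∀ x ∈ Subtype.val '' T, v ≠ x ∧ ¬ G.Adj v x := by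
    rintro _ ⟨⟨x, hx⟩, -, rfl⟩
    have : x ∉ closedNbhd G v := hx
    simp only [closedNbhd, Set.mem_insert_iff, SimpleGraph.mem_neighborSet] at this
    push_neg at this
    exact ⟨fun e => this.1 (by simp [e]), this.2⟩
  have hindep : IsIndepSet G (insert v (Subtype.val '' T)) := by
    rw [IsIndepSet, @Set.pairwise_insert_of_symm _ _ _ _ ⟨fun _ _ h => symm_not_adj G h⟩]
    exact ⟨indep_image hTindep, fun x hx _ => (hvnot x hx).2⟩
  have hvmem : v ∉ Subtype.val '' T := fun h => (hvnot v h).1 rfl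
  have hcard : (insert v (Subtype.val '' T)).ncard = T.ncard + 1 := by
    rw [Set.ncard_insert_of_notMem hvmem (Set.toFinite _),
      Set.ncard_image_of_injective _ Subtype.val_injective]
  have := ncard_le_alpha hindep
  rw [hcard, hTcard] at this
  exact this

lemma ncard_le_alpha_del_add_one {S : Set V} (hS : IsIndepSet G S) {v : V} (hv : v ∈ S) :
    S.ncard ≤ alpha (G.induce ((closedNbhd G v)ᶜ : Set V)) + 1 := by
  classical
  have hsub : S \ {v} ⊆ (closedNbhd G v)ᶜ := by
    rintro x ⟨hxS, hxv⟩
    simp only [Set.mem_compl_iff, closedNbhd, Set.mem_insert_iff,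
      SimpleGraph.mem_neighborSet]
    push_neg
    refine ⟨fun e => hxv (by simp [e]), fun h => ?_⟩
    exact hS hv hxS (fun e => hxv (by simp [← e])) h
  have hindep : IsIndepSet G (S \ {v}) := hS.mono Set.diff_subset
  have hle := ncard_le_alpha_induce hindep hsub
  have hins : insert v (S \ {v}) = S := by
    rw [Set.insert_diff_singleton, Set.insert_eq_of_mem hv]
  have : S.ncard = (S \ {v}).ncard + 1 := by
    conv_lhs => rw [← hins]
    exact Set.ncard_insert_of_notMem (by simp) (Set.toFinite _)
  omega

end Aux

theorem AIS_characterization {V : Type*} [Fintype V] (G : SimpleGraph V)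
    (hG : IsBlockGraph G) (w : V) :
    ((∀ u : V, ¬ G.Adj w u) → IsAIS G w) ∧
    ((∃ u : V, G.Adj w u) →
      (IsAIS G w ↔ ∀ u : V, G.Adj w u →
        alpha (G.induce ((closedNbhd G u)ᶜ : Set V)) <
          alpha (G.induce ((closedNbhd G w)ᶜ : Set V)))) := by
  classical
  constructor
  · -- isolated vertex is AIS
    intro hiso S hSindep hScard
    by_contra hw
    have hindep : IsIndepSet G (insert w S) := by
      rw [IsIndepSet, @Set.pairwise_insert_of_symm _ _ _ _ ⟨fun _ _ h => symm_not_adj G h⟩]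
      exact ⟨hSindep, fun x _ _ => hiso x⟩
    have hcard : (insert w S).ncard = S.ncard + 1 :=
      Set.ncard_insert_of_notMem hw (Set.toFinite _)
    have := ncard_le_alpha hindep
    rw [hcard, hScard] at this
    omega
  · rintro ⟨u0, hu0⟩
    constructor
    · -- AIS → strict inequalities
      intro hAIS u hadj
      -- alpha G = alpha(G - N[w]) + 1
      obtain ⟨S, hSindep, hScard⟩ := exists_max_indep G
      have hwS : w ∈ S := hAIS S hSindep hScard
      have h1 : alpha G ≤ alpha (G.induce ((closedNbhd G w)ᶜ : Set V)) + 1 := by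
        rw [← hScard]; exact ncard_le_alpha_del_add_one hSindep hwS
      by_contra hle
      push_neg at hle
      -- build a maximum independent set containing u, avoiding w
      obtain ⟨T, hTindep, hTcard⟩ :=
        exists_max_indep (G.induce ((closedNbhd G u)ᶜ : Set V))
      have hvnot : ∀ x ∈ Subtype.val '' T, u ≠ x ∧ ¬ G.Adj u x := by
        rintro _ ⟨⟨x, hx⟩, -, rfl⟩
        have : x ∉ closedNbhd G u := hx
        simp only [closedNbhd, Set.mem_insert_iff, SimpleGraph.mem_neighborSet] at this
        push_neg at this
        exact ⟨fun e => this.1 (by simp [e]), this.2⟩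
      have hindep : IsIndepSet G (insert u (Subtype.val '' T)) := by
        rw [IsIndepSet, @Set.pairwise_insert_of_symm _ _ _ _ ⟨fun _ _ h => symm_not_adj G h⟩]
        exact ⟨indep_image hTindep, fun x hx _ => (hvnot x hx).2⟩
      have humem : u ∉ Subtype.val '' T := fun h => (hvnot u h).1 rfl
      have hcard : (insert u (Subtype.val '' T)).ncard =
          alpha (G.induce ((closedNbhd G u)ᶜ : Set V)) + 1 := by
        rw [Set.ncard_insert_of_notMem humem (Set.toFinite _),
          Set.ncard_image_of_injective _ Subtype.val_injective, hTcard]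
      have hge := ncard_le_alpha hindep
      have hcard' : (insert u (Subtype.val '' T)).ncard = alpha G := by
        omega
      have hwmem := hAIS _ hindep hcard'
      rcases hwmem with h | h
      · exact G.irrefl (h ▸ hadj)
      · obtain ⟨⟨x, hx⟩, -, rfl⟩ := h
        exact hx (by simp [closedNbhd, SimpleGraph.mem_neighborSet, hadj.symm])
    · -- strict inequalities → AIS
      intro h S hSindep hScard
      by_contra hw
      by_cases hub : ∃ u ∈ S, G.Adj w u
      · obtain ⟨u, huS, hadj⟩ := hub
        have h1 : S.ncard ≤ alpha (G.induce ((closedNbhd G u)ᶜ : Set V)) + 1 :=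
          ncard_le_alpha_del_add_one hSindep huS
        have h2 := h u hadj
        have h3 := alpha_del_add_one_le G w
        omega
      · push_neg at hub
        have hindep : IsIndepSet G (insert w S) := by
          rw [IsIndepSet, @Set.pairwise_insert_of_symm _ _ _ _ ⟨fun _ _ h => symm_not_adj G h⟩]
          exact ⟨hSindep, fun x hx _ => hub x hx⟩
        have hcard : (insert w S).ncard = S.ncard + 1 :=
          Set.ncard_insert_of_notMem hw (Set.toFinite _)
        have := ncard_le_alpha hindep
        rw [hcard, hScard] at this
        omega

end BlockGraphPaper
end

section
/- Let G = GLS(A,k,B) be the GLS block graph built from positive integers n, k, B and A = (a_1, …, a_n) with 1 ≤ a_i ≤ B and a_1 + ⋯ + a_n = kB, with universal vertices y_0, y_1, …, y_n. Then |V(G)| = (k+1)·(kB + n + 1), ω(G) = k + 1, and α_min(G) = α(G, y_0) = n + 1 + kB. -/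
open scoped BigOperators

namespace BlockGraphPaper

variable {V : Type*}

section Lemmas

variable {n k B : ℕ} {a : Fin n → ℕ}

lemma adj_some_some_elim {i j : Fin (n+1)} {x : Fin (glsPar n B a i + 1) × Fin k}
    {y : Fin (glsPar n B a j + 1) × Fin k}
    (h : (GLSGraph n k B a).Adj ⟨i, some x⟩ ⟨j, some y⟩) :
    i = j ∧ (x.1 : ℕ) = (y.1 : ℕ) := by
  simp only [GLSGraph, SimpleGraph.fromRel_adj] at h
  obtain ⟨-, h | h⟩ := h <;> simp_all

lemma adj_none_some_elim {i j : Fin (n+1)} {y : Fin (glsPar n B a j + 1) × Fin k}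
    (h : (GLSGraph n k B a).Adj ⟨i, none⟩ ⟨j, some y⟩) : i = j := by
  simp only [GLSGraph, SimpleGraph.fromRel_adj] at h
  obtain ⟨-, h | h⟩ := h <;> simp_all

lemma adj_none_none_elim {i j : Fin (n+1)}
    (h : (GLSGraph n k B a).Adj ⟨i, none⟩ ⟨j, none⟩) : i ≠ j ∧ (i = 0 ∨ j = 0) := by
  simp only [GLSGraph, SimpleGraph.fromRel_adj] at h
  have hne : i ≠ j := fun hij => h.1 (by cases hij; rfl)
  refine ⟨hne, ?_⟩
  obtain ⟨-, h | h⟩ := h <;> simp_all <;> tauto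

lemma adj_some_some_intro {i : Fin (n+1)} {x y : Fin (glsPar n B a i + 1) × Fin k}
    (hxy : x ≠ y) (h : (x.1 : ℕ) = (y.1 : ℕ)) :
    (GLSGraph n k B a).Adj ⟨i, some x⟩ ⟨i, some y⟩ := by
  simp only [GLSGraph, SimpleGraph.fromRel_adj]
  refine ⟨by simp [hxy], Or.inl ?_⟩
  refine Or.inl ⟨?_, Or.inr (Or.inr ⟨(x.1 : ℕ), ?_, ?_⟩)⟩ <;> simp [h]

lemma adj_none_some_intro {i : Fin (n+1)} {y : Fin (glsPar n B a i + 1) × Fin k} :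
    (GLSGraph n k B a).Adj ⟨i, none⟩ ⟨i, some y⟩ := by
  simp only [GLSGraph, SimpleGraph.fromRel_adj]
  refine ⟨by simp, Or.inl ?_⟩
  refine Or.inl ⟨?_, Or.inl ?_⟩ <;> simp

lemma adj_none_none_intro {j : Fin (n+1)} (hj : j ≠ 0) :
    (GLSGraph n k B a).Adj ⟨0, none⟩ ⟨j, none⟩ := by
  simp only [GLSGraph, SimpleGraph.fromRel_adj]
  refine ⟨fun h => hj (congrArg Sigma.fst h).symm, Or.inl ?_⟩
  refine Or.inr ⟨?_, ?_, Or.inl ?_⟩ <;> simp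

/-- injective encoding of vertices into a non-dependent type -/
def enc : GLSV n k B a → Fin (n+1) × Option (ℕ × Fin k) :=
  fun u => (u.1, u.2.map (fun x => ((x.1 : ℕ), x.2)))

lemma enc_injective : Function.Injective (enc (n := n) (k := k) (B := B) (a := a)) := by
  rintro ⟨i, o⟩ ⟨j, o'⟩ h
  obtain ⟨h1, h2⟩ := Prod.mk.injEq _ _ _ _ ▸ h
  dsimp at h1 h2
  subst h1
  congr 1
  cases o <;> cases o' <;> simp_all
  exact Prod.ext (Fin.val_injective h2.1) h2.2

lemma ncard_range_eq {α β : Type*} [Fintype α] (f : α → β) (hf : Function.Injective f) :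
    (Set.range f).ncard = Fintype.card α := by
  rw [← Nat.card_coe_set_eq, Nat.card_range_of_injective hf, Nat.card_eq_fintype_card]

lemma ncard_le_card {α : Type*} [Fintype α] (S : Set α) : S.ncard ≤ Fintype.card α := by
  simpa [Set.ncard_univ] using Set.ncard_le_ncard (Set.subset_univ S) Set.finite_univ

/-- the index type for the basic independent sets -/
abbrev IdxD (n B : ℕ) (a : Fin n → ℕ) : Type := Option ((j : Fin n) × Fin (a j + 1))

lemma card_IdxD (hsum : ∑ i, a i = k * B) :
    Fintype.card (IdxD n B a) = n + 1 + k * B := by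
  simp only [IdxD, Fintype.card_option, Fintype.card_sigma, Fintype.card_fin]
  rw [Finset.sum_add_distrib, hsum]
  simp [mul_comm]
  ring

end Lemmas

section Main

variable {n k B : ℕ} {a : Fin n → ℕ}

/-- canonical independent set for `y_0` -/
def f0 (p0 : Fin k) : IdxD n B a → GLSV n k B a
  | none => ⟨0, none⟩
  | some ⟨j, c⟩ => ⟨j.succ, some (c, p0)⟩

lemma f0_injective (p0 : Fin k) : Function.Injective (f0 (n := n) (B := B) (a := a) p0) := by
  rintro (_ | ⟨j, c⟩) (_ | ⟨j', c'⟩) h <;> simp only [f0] at h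
  · rfl
  · exact absurd (congrArg (fun u => u.2.map (fun x => x.2)) h) (by simp)
  · exact absurd (congrArg (fun u => u.2.map (fun x => x.2)) h) (by simp)
  · have hj : j = j' := Fin.succ_injective _ (congrArg Sigma.fst h)
    subst hj
    have h2 := congrArg (fun u : GLSV n k B a => u.2.map (fun x => ((x.1 : ℕ), x.2))) h
    simp only [Option.map_some] at h2
    have : (c : ℕ) = (c' : ℕ) := by simpa using congrArg (fun o => o.map Prod.fst) h2
    simp [Fin.val_injective this]

lemma f0_indep (p0 : Fin k) :
    IsIndepSet (GLSGraph n k B a) (Set.range (f0 (n := n) (B := B) (a := a) p0)) := by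
  rintro _ ⟨u, rfl⟩ _ ⟨v, rfl⟩ hne hadj
  match u, v with
  | none, none => exact hne rfl
  | none, some ⟨j, c⟩ =>
      exact Fin.succ_ne_zero j (adj_none_some_elim hadj).symm
  | some ⟨j, c⟩, none =>
      exact Fin.succ_ne_zero j (adj_none_some_elim hadj.symm).symm
  | some ⟨j, c⟩, some ⟨j', c'⟩ =>
      obtain ⟨h1, h2⟩ := adj_some_some_elim hadj
      have hj : j = j' := Fin.succ_injective _ h1
      subst hj
      have hc : c = c' := Fin.val_injective (by simpa using h2)
      exact hne (by rw [hc])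

/-- copy-value of a vertex -/
def cval : GLSV n k B a → Option ℕ := fun u => u.2.map (fun x => (x.1 : ℕ))

/-- canonical independent set for `y_{j+1}` -/
def fY (p0 : Fin k) (j : Fin n) (hj : a j ≤ B) : IdxD n B a → GLSV n k B a
  | none => ⟨j.succ, none⟩
  | some ⟨j', c⟩ =>
    if h : j' = j then ⟨0, some (⟨(c : ℕ), by subst h; have := c.isLt; show (c : ℕ) < B + 1; omega⟩, p0)⟩
    else ⟨j'.succ, some (c, p0)⟩

lemma fY_injective (p0 : Fin k) (j : Fin n) (hj : a j ≤ B) :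
    Function.Injective (fY (n := n) (B := B) (a := a) p0 j hj) := by
  rintro (_ | ⟨j1, c1⟩) (_ | ⟨j2, c2⟩) h <;> simp only [fY] at h
  · rfl
  · split_ifs at h <;>
      exact absurd (congrArg cval h) (by simp [cval])
  · split_ifs at h <;>
      exact absurd (congrArg cval h) (by simp [cval])
  · split_ifs at h with h1 h2 h2
    · subst h1; subst h2
      have := congrArg cval h
      simp only [cval, Option.map_some] at this
      have hc : (c1 : ℕ) = (c2 : ℕ) := by simpa using this
      simp [Fin.val_injective hc]
    · exact absurd (congrArg Sigma.fst h) (by simpa using (Fin.succ_ne_zero j2).symm)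
    · exact absurd (congrArg Sigma.fst h) (by simpa using Fin.succ_ne_zero j1)
    · have hjj : j1 = j2 := Fin.succ_injective _ (congrArg Sigma.fst h)
      subst hjj
      have := congrArg cval h
      simp only [cval, Option.map_some] at this
      have hc : (c1 : ℕ) = (c2 : ℕ) := by simpa using this
      simp [Fin.val_injective hc]

lemma fY_indep (p0 : Fin k) (j : Fin n) (hj : a j ≤ B) :
    IsIndepSet (GLSGraph n k B a) (Set.range (fY (n := n) (B := B) (a := a) p0 j hj)) := by
  have key : ∀ u v : IdxD n B a,
      (GLSGraph n k B a).Adj (fY p0 j hj u) (fY p0 j hj v) → fY p0 j hj u = fY p0 j hj v := by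
    intro u v hadj
    match u, v with
    | none, none => rfl
    | none, some ⟨j2, c2⟩ =>
      simp only [fY] at hadj
      by_cases h2 : j2 = j
      · rw [dif_pos h2] at hadj
        exact absurd (adj_none_some_elim hadj) (Fin.succ_ne_zero j)
      · rw [dif_neg h2] at hadj
        exact absurd (Fin.succ_injective _ (adj_none_some_elim hadj)).symm h2
    | some ⟨j1, c1⟩, none =>
      simp only [fY] at hadj
      by_cases h1 : j1 = j
      · rw [dif_pos h1] at hadj
        exact absurd (adj_none_some_elim hadj.symm) (Fin.succ_ne_zero j)
      · rw [dif_neg h1] at hadj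
        exact absurd (Fin.succ_injective _ (adj_none_some_elim hadj.symm)).symm h1
    | some ⟨j1, c1⟩, some ⟨j2, c2⟩ =>
      simp only [fY] at hadj ⊢
      by_cases h1 : j1 = j <;> by_cases h2 : j2 = j
      · rw [dif_pos h1] at hadj ⊢; rw [dif_pos h2] at hadj ⊢
        subst h1; subst h2
        obtain ⟨-, hv⟩ := adj_some_some_elim hadj
        have hc : (c1 : ℕ) = (c2 : ℕ) := by simpa using hv
        simp [hc]
      · rw [dif_pos h1] at hadj; rw [dif_neg h2] at hadj
        exact absurd (adj_some_some_elim hadj).1.symm (Fin.succ_ne_zero j2)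
      · rw [dif_neg h1] at hadj; rw [dif_pos h2] at hadj
        exact absurd (adj_some_some_elim hadj).1 (Fin.succ_ne_zero j1)
      · rw [dif_neg h1] at hadj ⊢; rw [dif_neg h2] at hadj ⊢
        obtain ⟨hf, hv⟩ := adj_some_some_elim hadj
        have hjj : j1 = j2 := Fin.succ_injective _ hf
        subst hjj
        have hc : (c1 : ℕ) = (c2 : ℕ) := by simpa using hv
        simp [Fin.val_injective hc]
  rintro _ ⟨u, rfl⟩ _ ⟨v, rfl⟩ hne hadj
  exact hne (key u v hadj)

/-- canonical independent set through a non-universal vertex of flower `0` -/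
def fS0 (p0 : Fin k) (x : Fin (glsPar n B a 0 + 1) × Fin k) : IdxD n B a → GLSV n k B a
  | none => ⟨0, some x⟩
  | some ⟨j, c⟩ => ⟨j.succ, some (c, p0)⟩

lemma fS0_injective (p0 : Fin k) (x : Fin (glsPar n B a 0 + 1) × Fin k) :
    Function.Injective (fS0 (n := n) (B := B) (a := a) p0 x) := by
  intro u v h
  match u, v with
  | none, none => rfl
  | none, some ⟨j2, c2⟩ =>
    exact absurd (congrArg Sigma.fst h) (by simpa [fS0] using (Fin.succ_ne_zero j2).symm)
  | some ⟨j1, c1⟩, none =>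
    exact absurd (congrArg Sigma.fst h) (by simpa [fS0] using Fin.succ_ne_zero j1)
  | some ⟨j1, c1⟩, some ⟨j2, c2⟩ =>
    simp only [fS0] at h
    have hjj : j1 = j2 := Fin.succ_injective _ (congrArg Sigma.fst h)
    subst hjj
    have h2 := congrArg cval h
    simp only [cval, Option.map_some] at h2
    have hc : (c1 : ℕ) = (c2 : ℕ) := by simpa using h2
    simp [Fin.val_injective hc]

lemma fS0_indep (p0 : Fin k) (x : Fin (glsPar n B a 0 + 1) × Fin k) :
    IsIndepSet (GLSGraph n k B a) (Set.range (fS0 (n := n) (B := B) (a := a) p0 x)) := by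
  have key : ∀ u v : IdxD n B a,
      (GLSGraph n k B a).Adj (fS0 p0 x u) (fS0 p0 x v) → fS0 p0 x u = fS0 p0 x v := by
    intro u v hadj
    match u, v with
    | none, none => rfl
    | none, some ⟨j2, c2⟩ =>
      exact absurd (adj_some_some_elim hadj).1 (Fin.succ_ne_zero j2).symm
    | some ⟨j1, c1⟩, none =>
      exact absurd (adj_some_some_elim hadj).1 (Fin.succ_ne_zero j1)
    | some ⟨j1, c1⟩, some ⟨j2, c2⟩ =>
      obtain ⟨hf, hv⟩ := adj_some_some_elim hadj
      have hjj : j1 = j2 := Fin.succ_injective _ hf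
      subst hjj
      have hc : (c1 : ℕ) = (c2 : ℕ) := by simpa using hv
      simp [fS0, Fin.val_injective hc]
  rintro _ ⟨u, rfl⟩ _ ⟨v, rfl⟩ hne hadj
  exact hne (key u v hadj)

/-- canonical independent set through a non-universal vertex of flower `j+1` -/
def fS (p0 : Fin k) (j : Fin n) (x : Fin (glsPar n B a j.succ + 1) × Fin k) :
    IdxD n B a → GLSV n k B a
  | none => ⟨0, some (⟨0, Nat.succ_pos _⟩, p0)⟩
  | some ⟨j', c⟩ =>
    if h : j' = j ∧ (c : ℕ) = (x.1 : ℕ) then ⟨j.succ, some x⟩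
    else ⟨j'.succ, some (c, p0)⟩

lemma fS_flower (p0 : Fin k) (j : Fin n) (x : Fin (glsPar n B a j.succ + 1) × Fin k)
    (j' : Fin n) (c : Fin (a j' + 1)) :
    (fS (n := n) (B := B) (a := a) p0 j x (some ⟨j', c⟩)).1 = j'.succ ∧
    cval (fS (n := n) (B := B) (a := a) p0 j x (some ⟨j', c⟩)) = some (c : ℕ) := by
  simp only [fS]
  by_cases h : j' = j ∧ (c : ℕ) = (x.1 : ℕ)
  · rw [dif_pos h]
    obtain ⟨h1, h2⟩ := h
    subst h1
    exact ⟨rfl, by simp [cval, h2]⟩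
  · rw [dif_neg h]
    exact ⟨rfl, by simp [cval]⟩

lemma fS_eq_of (p0 : Fin k) (j : Fin n) (x : Fin (glsPar n B a j.succ + 1) × Fin k)
    (j1 j2 : Fin n) (c1 : Fin (a j1 + 1)) (c2 : Fin (a j2 + 1))
    (hf : j1 = j2) (hv : (c1 : ℕ) = (c2 : ℕ)) :
    fS (n := n) (B := B) (a := a) p0 j x (some ⟨j1, c1⟩) =
    fS (n := n) (B := B) (a := a) p0 j x (some ⟨j2, c2⟩) := by
  subst hf
  have : c1 = c2 := Fin.val_injective hv
  rw [this]

lemma fS_injective (p0 : Fin k) (j : Fin n) (x : Fin (glsPar n B a j.succ + 1) × Fin k) :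
    Function.Injective (fS (n := n) (B := B) (a := a) p0 j x) := by
  intro u v h
  match u, v with
  | none, none => rfl
  | none, some ⟨j2, c2⟩ =>
    have h1 := congrArg Sigma.fst h
    rw [(fS_flower p0 j x j2 c2).1] at h1
    exact absurd h1 (by simpa [fS] using (Fin.succ_ne_zero j2).symm)
  | some ⟨j1, c1⟩, none =>
    have h1 := congrArg Sigma.fst h
    rw [(fS_flower p0 j x j1 c1).1] at h1
    exact absurd h1 (by simpa [fS] using Fin.succ_ne_zero j1)
  | some ⟨j1, c1⟩, some ⟨j2, c2⟩ =>
    have h1 := congrArg Sigma.fst h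
    rw [(fS_flower p0 j x j1 c1).1, (fS_flower p0 j x j2 c2).1] at h1
    have hjj : j1 = j2 := Fin.succ_injective _ h1
    subst hjj
    have h2 := congrArg cval h
    rw [(fS_flower p0 j x j1 c1).2, (fS_flower p0 j x j1 c2).2] at h2
    have hc : (c1 : ℕ) = (c2 : ℕ) := by simpa using h2
    simp [Fin.val_injective hc]

lemma fS_indep (p0 : Fin k) (j : Fin n) (x : Fin (glsPar n B a j.succ + 1) × Fin k) :
    IsIndepSet (GLSGraph n k B a) (Set.range (fS (n := n) (B := B) (a := a) p0 j x)) := by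
  have key : ∀ u v : IdxD n B a,
      (GLSGraph n k B a).Adj (fS p0 j x u) (fS p0 j x v) → fS p0 j x u = fS p0 j x v := by
    intro u v hadj
    have flem := fun (j' : Fin n) (c : Fin (a j' + 1)) => fS_flower p0 j x j' c
    match u, v with
    | none, none => rfl
    | none, some ⟨j2, c2⟩ =>
      rcases hw : fS p0 j x (some ⟨j2, c2⟩) with ⟨i2, o2⟩
      have hfl : i2 = j2.succ := by have := (flem j2 c2).1; rw [hw] at this; exact this
      match o2 with
      | none =>
        have := congrArg cval hw
        rw [(flem j2 c2).2] at this
        simp [cval] at this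
      | some y2 =>
        rw [hw] at hadj
        have := (adj_some_some_elim hadj).1
        rw [hfl] at this
        exact absurd this (Fin.succ_ne_zero j2).symm
    | some ⟨j1, c1⟩, none =>
      rcases hw : fS p0 j x (some ⟨j1, c1⟩) with ⟨i1, o1⟩
      have hfl : i1 = j1.succ := by have := (flem j1 c1).1; rw [hw] at this; exact this
      match o1 with
      | none =>
        have := congrArg cval hw
        rw [(flem j1 c1).2] at this
        simp [cval] at this
      | some y1 =>
        rw [hw] at hadj
        have := (adj_some_some_elim hadj).1
        rw [hfl] at this
        exact absurd this (Fin.succ_ne_zero j1)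
    | some ⟨j1, c1⟩, some ⟨j2, c2⟩ =>
      rcases hw1 : fS p0 j x (some ⟨j1, c1⟩) with ⟨i1, o1⟩
      rcases hw2 : fS p0 j x (some ⟨j2, c2⟩) with ⟨i2, o2⟩
      rw [hw1, hw2] at hadj
      have hfl1 : i1 = j1.succ := by have := (flem j1 c1).1; rw [hw1] at this; exact this
      have hfl2 : i2 = j2.succ := by have := (flem j2 c2).1; rw [hw2] at this; exact this
      have hcv1 : cval (⟨i1, o1⟩ : GLSV n k B a) = some (c1 : ℕ) := by
        have := (flem j1 c1).2; rw [hw1] at this; exact this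
      have hcv2 : cval (⟨i2, o2⟩ : GLSV n k B a) = some (c2 : ℕ) := by
        have := (flem j2 c2).2; rw [hw2] at this; exact this
      match o1, o2 with
      | none, _ => simp [cval] at hcv1
      | _, none => simp [cval] at hcv2
      | some y1, some y2 =>
        obtain ⟨hf, hv⟩ := adj_some_some_elim hadj
        rw [hfl1, hfl2] at hf
        have hjj : j1 = j2 := Fin.succ_injective _ hf
        simp only [cval, Option.map_some] at hcv1 hcv2
        have hc : (c1 : ℕ) = (c2 : ℕ) := by
          have e1 : (y1.1 : ℕ) = (c1 : ℕ) := by simpa using hcv1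
          have e2 : (y2.1 : ℕ) = (c2 : ℕ) := by simpa using hcv2
          omega
        rw [← hw1, ← hw2]
        exact fS_eq_of p0 j x j1 j2 c1 c2 hjj hc
  rintro _ ⟨u, rfl⟩ _ ⟨v, rfl⟩ hne hadj
  exact hne (key u v hadj)


lemma le_alphaAt_s11 {α : Type*} [Fintype α] {D : Type*} [Fintype D] (G : SimpleGraph α) (v : α)
    (f : D → α) (hinj : Function.Injective f) (hind : IsIndepSet G (Set.range f))
    (hv : v ∈ Set.range f) : Fintype.card D ≤ alphaAt G v := by
  apply le_csSup
  · exact ⟨Fintype.card α, by rintro m ⟨S, -, -, rfl⟩; exact ncard_le_card S⟩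
  · exact ⟨Set.range f, hind, hv, ncard_range_eq f hinj⟩

lemma alphaAt_lower (hk : 1 ≤ k) (hab : ∀ i, a i ≤ B) (hsum : ∑ i, a i = k * B)
    (v : GLSV n k B a) : n + 1 + k * B ≤ alphaAt (GLSGraph n k B a) v := by
  have p0 : Fin k := ⟨0, hk⟩
  rw [← card_IdxD (a := a) (k := k) hsum]
  obtain ⟨i, o⟩ := v
  match o with
  | none =>
    rcases Fin.eq_zero_or_eq_succ i with rfl | ⟨j, rfl⟩
    · exact le_alphaAt_s11 _ _ (f0 p0) (f0_injective p0) (f0_indep p0) ⟨none, rfl⟩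
    · exact le_alphaAt_s11 _ _ (fY p0 j (hab j)) (fY_injective p0 j (hab j))
        (fY_indep p0 j (hab j)) ⟨none, rfl⟩
  | some x =>
    rcases Fin.eq_zero_or_eq_succ i with rfl | ⟨j, rfl⟩
    · exact le_alphaAt_s11 _ _ (fS0 p0 x) (fS0_injective p0 x) (fS0_indep p0 x) ⟨none, rfl⟩
    · refine le_alphaAt_s11 _ _ (fS p0 j x) (fS_injective p0 j x) (fS_indep p0 j x)
        ⟨some ⟨j, ⟨(x.1 : ℕ), x.1.isLt⟩⟩, ?_⟩
      show dite _ _ _ = _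
      rw [dif_pos (show j = j ∧ ((⟨(x.1 : ℕ), x.1.isLt⟩ : Fin (a j + 1)) : ℕ) = (x.1 : ℕ) from ⟨rfl, rfl⟩)]

def gmap : IdxD n B a → Option (Fin (n + 1) × ℕ)
  | none => none
  | some ⟨j, c⟩ => some (j.succ, (c : ℕ))

lemma gmap_injective : Function.Injective (gmap (n := n) (B := B) (a := a)) := by
  intro u v h
  match u, v with
  | none, none => rfl
  | none, some ⟨j2, c2⟩ => simp [gmap] at h
  | some ⟨j1, c1⟩, none => simp [gmap] at h
  | some ⟨j1, c1⟩, some ⟨j2, c2⟩ =>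
    simp only [gmap, Option.some.injEq, Prod.mk.injEq] at h
    obtain ⟨h1, h2⟩ := h
    have hjj : j1 = j2 := Fin.succ_injective _ h1
    subst hjj
    simp [Fin.val_injective h2]

lemma alphaAt_y0_le (hsum : ∑ i, a i = k * B) :
    alphaAt (GLSGraph n k B a) ⟨0, none⟩ ≤ n + 1 + k * B := by
  apply csSup_le
  · exact ⟨1, {⟨0, none⟩}, Set.pairwise_singleton _ _, rfl, Set.ncard_singleton _⟩
  rintro m ⟨S, hS, hy, rfl⟩
  classical
  set Φ : GLSV n k B a → Option (Fin (n + 1) × ℕ) :=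
    fun u => u.2.map (fun y => (u.1, (y.1 : ℕ))) with hΦ
  have hA : ∀ u ∈ S, u.2 = (none : Option (Fin (glsPar n B a u.1 + 1) × Fin k)) →
      u = (⟨0, none⟩ : GLSV n k B a) := by
    rintro ⟨i, o⟩ hu h
    dsimp at h
    subst h
    by_contra hne
    have hi : i ≠ 0 := fun h0 => hne (by rw [h0])
    exact hS hy hu (fun he => hne he.symm) (adj_none_none_intro hi)
  have hB0 : ∀ (x : Fin (glsPar n B a 0 + 1) × Fin k), (⟨0, some x⟩ : GLSV n k B a) ∉ S := by
    intro x hx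
    refine hS hy hx ?_ adj_none_some_intro
    intro he
    exact absurd (congrArg cval he) (by simp [cval])
  have hinj : Set.InjOn Φ S := by
    rintro ⟨i, o⟩ hu ⟨i', o'⟩ hv h
    match o, o' with
    | none, none => rw [hA _ hu rfl, hA _ hv rfl]
    | none, some y => simp [hΦ] at h
    | some y, none => simp [hΦ] at h
    | some y1, some y2 =>
      simp only [hΦ, Option.map_some, Option.some.injEq, Prod.mk.injEq] at h
      obtain ⟨h1, h2⟩ := h
      subst h1
      by_contra hne
      have hxy : y1 ≠ y2 := fun he => hne (by rw [he])
      exact hS hu hv hne (adj_some_some_intro hxy h2)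
  rw [← Set.ncard_image_of_injOn hinj]
  have hsub : Φ '' S ⊆ Set.range (gmap (n := n) (B := B) (a := a)) := by
    rintro _ ⟨⟨i, o⟩, hu, rfl⟩
    match o with
    | none => exact ⟨none, rfl⟩
    | some y =>
      have hi : i ≠ 0 := by
        intro h0
        subst h0
        exact hB0 y hu
      obtain ⟨j, rfl⟩ := Fin.eq_succ_of_ne_zero hi
      exact ⟨some ⟨j, ⟨(y.1 : ℕ), y.1.isLt⟩⟩, rfl⟩
  calc (Φ '' S).ncard ≤ (Set.range (gmap (n := n) (B := B) (a := a))).ncard :=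
        Set.ncard_le_ncard hsub (Set.toFinite _)
    _ = Fintype.card (IdxD n B a) := ncard_range_eq _ gmap_injective
    _ = n + 1 + k * B := card_IdxD hsum

def gq : Option (Fin k) → GLSV n k B a
  | none => ⟨0, none⟩
  | some p => ⟨0, some (⟨0, Nat.succ_pos _⟩, p)⟩

lemma gq_injective : Function.Injective (gq (n := n) (k := k) (B := B) (a := a)) := by
  intro u v h
  match u, v with
  | none, none => rfl
  | none, some p => exact absurd (congrArg cval h) (by simp [cval, gq])
  | some p, none => exact absurd (congrArg cval h) (by simp [cval, gq])
  | some p, some q =>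
    have := congrArg (fun u : GLSV n k B a => u.2.map (fun x => x.2)) h
    simp only [gq, Option.map_some] at this
    simpa using this

lemma gq_clique : (GLSGraph n k B a).IsClique (Set.range (gq (n := n) (k := k) (B := B) (a := a))) := by
  rintro _ ⟨u, rfl⟩ _ ⟨v, rfl⟩ hne
  match u, v with
  | none, none => exact absurd rfl hne
  | none, some p => exact adj_none_some_intro
  | some p, none => exact adj_none_some_intro.symm
  | some p, some q =>
    have hpq : p ≠ q := fun he => hne (by rw [he])
    exact adj_some_some_intro (fun he => hpq (congrArg Prod.snd he)) rfl

lemma clique_bound (hk : 1 ≤ k) (S : Set (GLSV n k B a))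
    (hS : (GLSGraph n k B a).IsClique S) : S.ncard ≤ k + 1 := by
  classical
  by_cases hex : ∃ u ∈ S, ∃ v ∈ S, u ≠ v ∧ u.2 = none ∧ v.2 = none
  · obtain ⟨⟨iu, ou⟩, hu, ⟨iv, ov⟩, hv, huv, hun, hvn⟩ := hex
    dsimp at hun hvn
    subst hun; subst hvn
    have hsub : S ⊆ {⟨iu, none⟩, ⟨iv, none⟩} := by
      rintro ⟨iw, ow⟩ hw
      by_contra hwmem
      simp only [Set.mem_insert_iff, Set.mem_singleton_iff, not_or] at hwmem
      obtain ⟨hwu, hwv⟩ := hwmem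
      have h1 := adj_none_none_elim (hS hu hv huv)
      match ow with
      | none =>
        have h2 := adj_none_none_elim (hS hu hw (fun he => hwu he.symm))
        have h3 := adj_none_none_elim (hS hv hw (fun he => hwv he.symm))
        rcases h1.2 with e1 | e1 <;> rcases h2.2 with e2 | e2 <;>
          rcases h3.2 with e3 | e3 <;> simp_all
      | some yw =>
        have h2 := adj_none_some_elim (hS hu hw (fun he => hwu he.symm))
        have h3 := adj_none_some_elim (hS hv hw (fun he => hwv he.symm))
        exact h1.1 (h2.trans h3.symm)
    calc S.ncard ≤ ({⟨iu, none⟩, ⟨iv, none⟩} : Set (GLSV n k B a)).ncard :=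
          Set.ncard_le_ncard hsub (Set.toFinite _)
      _ ≤ 1 + 1 := le_trans (Set.ncard_insert_le _ _) (by simp [Set.ncard_singleton])
      _ ≤ k + 1 := by omega
  · push_neg at hex
    set ψ : GLSV n k B a → Option (Fin k) := fun u => u.2.map (fun x => x.2) with hψ
    have hinj : Set.InjOn ψ S := by
      rintro ⟨i, o⟩ hu ⟨i', o'⟩ hv h
      match o, o' with
      | none, none =>
        by_contra hne
        exact hex _ hu _ hv hne rfl rfl
      | none, some y => simp [hψ] at h
      | some y, none => simp [hψ] at h
      | some y1, some y2 =>
        simp only [hψ, Option.map_some, Option.some.injEq] at h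
        by_contra hne
        obtain ⟨h1, h2⟩ := adj_some_some_elim (hS hu hv hne)
        subst h1
        exact hne (by rw [Prod.ext (Fin.val_injective h2) h])
    rw [← Set.ncard_image_of_injOn hinj]
    calc (ψ '' S).ncard ≤ Fintype.card (Option (Fin k)) := ncard_le_card _
      _ = k + 1 := by simp


theorem gls_parameters' (hn : 1 ≤ n) (hk : 1 ≤ k) (hB : 1 ≤ B)
    (ha : ∀ i, 1 ≤ a i ∧ a i ≤ B) (hsum : ∑ i, a i = k * B) :
    Fintype.card (GLSV n k B a) = (k + 1) * (k * B + n + 1) ∧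
    cliqueNum (GLSGraph n k B a) = k + 1 ∧
    alphaMin (GLSGraph n k B a) = alphaAt (GLSGraph n k B a) (glsY n k B a 0) ∧
    alphaAt (GLSGraph n k B a) (glsY n k B a 0) = n + 1 + k * B := by
  have hab : ∀ i, a i ≤ B := fun i => (ha i).2
  have h4 : alphaAt (GLSGraph n k B a) (glsY n k B a 0) = n + 1 + k * B :=
    le_antisymm (alphaAt_y0_le hsum) (alphaAt_lower hk hab hsum _)
  refine ⟨?_, ?_, ?_, h4⟩
  · simp only [GLSV, Fintype.card_sigma, Fintype.card_option, Fintype.card_prod,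
      Fintype.card_fin]
    rw [Fin.sum_univ_succ]
    simp only [glsPar, Fin.cases_zero, Fin.cases_succ]
    have hc : ∀ j : Fin n, (a j + 1) * k + 1 = a j * k + (k + 1) := fun j => by ring
    rw [Finset.sum_congr rfl (fun j _ => hc j), Finset.sum_add_distrib, ← Finset.sum_mul,
      hsum, Finset.sum_const, Finset.card_univ, Fintype.card_fin]
    ring
  · have hmem : k + 1 ∈ {m | ∃ S : Set (GLSV n k B a), (GLSGraph n k B a).IsClique S ∧
        S.ncard = m} := by
      refine ⟨Set.range (gq (n := n) (k := k) (B := B) (a := a)), gq_clique, ?_⟩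
      rw [ncard_range_eq _ gq_injective]
      simp
    apply le_antisymm
    · apply csSup_le ⟨k + 1, hmem⟩
      rintro m ⟨S, hS, rfl⟩
      exact clique_bound hk S hS
    · exact le_csSup ⟨Fintype.card (GLSV n k B a),
        by rintro m ⟨S, -, rfl⟩; exact ncard_le_card S⟩ hmem
  · haveI : Nonempty (GLSV n k B a) := ⟨⟨0, none⟩⟩
    apply le_antisymm
    · exact ciInf_le (OrderBot.bddBelow _) _
    · refine le_ciInf fun v => ?_
      rw [h4]
      exact alphaAt_lower hk hab hsum v

end Main

theorem gls_parameters (n k B : ℕ) (hn : 1 ≤ n) (hk : 1 ≤ k) (hB : 1 ≤ B)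
    (a : Fin n → ℕ) (ha : ∀ i, 1 ≤ a i ∧ a i ≤ B)
    (hsum : ∑ i, a i = k * B) :
    Fintype.card (GLSV n k B a) = (k + 1) * (k * B + n + 1) ∧
    cliqueNum (GLSGraph n k B a) = k + 1 ∧
    alphaMin (GLSGraph n k B a) = alphaAt (GLSGraph n k B a) (glsY n k B a 0) ∧
    alphaAt (GLSGraph n k B a) (glsY n k B a 0) = n + 1 + k * B :=
  gls_parameters' hn hk hB ha hsum

end BlockGraphPaper
end

section
/- Let G = GLS(A,k,B) be the GLS block graph built from positive integers n ≥ 1, k with 1 ≤ k ≤ n, B, and A = (a_1, …, a_n) with 1 ≤ a_i ≤ B and a_1 + ⋯ + a_n = kB. Then G admits an equitable (n+2)-coloring. -/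
open scoped BigOperators

namespace BlockGraphPaper

variable {V : Type*}

section AuxiliaryLemmas

open Finset

/-- Count of naturals below `q` (as `Fin q`) that are `< t`. -/
private lemma sum_fin_ite_lt (q t : ℕ) (h : t ≤ q) :
    (∑ r : Fin q, if (r : ℕ) < t then 1 else 0) = t := by
  rw [Fin.sum_univ_eq_sum_range (fun x => if x < t then 1 else 0) q]
  rw [← Finset.card_filter]
  have : (Finset.range q).filter (fun x => x < t) = Finset.range t := by
    ext x; simp only [Finset.mem_filter, Finset.mem_range]; omega
  rw [this, Finset.card_range]

private lemma sum_fin_ite_eq (q v : ℕ) (h : v < q) :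
    (∑ r : Fin q, if (r : ℕ) = v then 1 else 0) = 1 := by
  rw [Fin.sum_univ_eq_sum_range (fun x => if x = v then 1 else 0) q]
  rw [← Finset.card_filter]
  have : (Finset.range q).filter (fun x => x = v) = {v} := by
    ext x; simp only [Finset.mem_filter, Finset.mem_range, Finset.mem_singleton]; omega
  rw [this, Finset.card_singleton]

private lemma sum_ite_emb {q k : ℕ} (s : Finset (Fin q)) (h : s.card = k) (r : Fin q) :
    (∑ p : Fin k, if s.orderEmbOfFin h p = r then 1 else 0) = if r ∈ s then 1 else 0 := by
  by_cases hr : r ∈ s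
  · have hr' : r ∈ Set.range (s.orderEmbOfFin h) := by
      rw [Finset.range_orderEmbOfFin]; exact hr
    obtain ⟨p₀, hp₀⟩ := hr'
    rw [if_pos hr]
    calc (∑ p : Fin k, if s.orderEmbOfFin h p = r then 1 else 0)
        = ∑ p : Fin k, if p = p₀ then 1 else 0 := by
          refine Finset.sum_congr rfl fun p _ => ?_
          congr 1
          apply propext
          constructor
          · intro hp; exact (s.orderEmbOfFin h).injective (hp.trans hp₀.symm)
          · rintro rfl; exact hp₀
      _ = 1 := by simp
  · rw [if_neg hr]
    refine Finset.sum_eq_zero fun p _ => ?_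
    rw [if_neg]
    intro hp
    exact hr (hp ▸ Finset.orderEmbOfFin_mem s h p)

/-- The greedy distribution lemma: given `R` copies, where `cap r` copies are
"forbidden" color `r`, and color demands `D r` with `∑ D = k·R` and
`D r + cap r ≤ R` for every `r`, one can give each copy a `k`-set of colors
avoiding its forbidden color, meeting all the demands exactly. -/
private lemma greedy (k q : ℕ) :
    ∀ (R : ℕ) (cap D : Fin q → ℕ),
      (∑ r, cap r = R) → (∑ r, D r = k * R) → (∀ r, D r + cap r ≤ R) →
      ∃ Ψ : Fin q → ℕ → Finset (Fin q),
        (∀ r₀ c, c < cap r₀ → ((Ψ r₀ c).card = k ∧ r₀ ∉ Ψ r₀ c)) ∧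
        (∀ r, (∑ r₀, ((Finset.range (cap r₀)).filter (fun c => r ∈ Ψ r₀ c)).card) = D r) := by
  intro R
  induction R with
  | zero =>
    intro cap D hcap hD hle
    have hc : ∀ r, cap r = 0 := fun r =>
      (Finset.sum_eq_zero_iff.mp hcap) r (Finset.mem_univ r)
    have hd : ∀ r, D r = 0 := fun r => by have := hle r; omega
    refine ⟨fun _ _ => ∅, fun r₀ c hcv => absurd hcv (by rw [hc r₀]; omega), fun r => ?_⟩
    rw [hd r]
    refine Finset.sum_eq_zero fun r₀ _ => ?_
    rw [hc r₀]
    simp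
  | succ R ih =>
    intro cap D hcap hD hle
    have hex : ∃ r₀, 1 ≤ cap r₀ := by
      by_contra h
      push_neg at h
      have : ∑ r, cap r = 0 := Finset.sum_eq_zero fun r _ => by have := h r; omega
      omega
    obtain ⟨r₀, hr₀⟩ := hex
    classical
    set A : Finset (Fin q) := Finset.univ.filter (fun r => r ≠ r₀ ∧ D r + cap r = R + 1) with hAdef
    set P : Finset (Fin q) := Finset.univ.filter (fun r => r ≠ r₀ ∧ 1 ≤ D r) with hPdef
    have capbound : ∀ r, r ≠ r₀ → cap r ≤ R := by
      intro r hne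
      have h1 := Finset.sum_le_sum_of_subset (f := cap) (Finset.subset_univ ({r, r₀} : Finset (Fin q)))
      rw [Finset.sum_pair hne, hcap] at h1
      omega
    have hAP : A ⊆ P := by
      intro r hr
      rw [hAdef, Finset.mem_filter] at hr
      obtain ⟨-, hne, heq⟩ := hr
      rw [hPdef, Finset.mem_filter]
      exact ⟨Finset.mem_univ r, hne, by have := capbound r hne; omega⟩
    have hAcard : A.card ≤ k := by
      have h1 : ∑ r ∈ A, (D r + cap r) = A.card * (R + 1) := by
        calc ∑ r ∈ A, (D r + cap r) = ∑ _r ∈ A, (R + 1) :=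
              Finset.sum_congr rfl (fun r hr => by
                rw [hAdef, Finset.mem_filter] at hr; exact hr.2.2)
          _ = A.card * (R + 1) := by rw [Finset.sum_const, smul_eq_mul]
      have h2 : ∑ r ∈ A, D r ≤ k * (R+1) := by
        rw [← hD]; exact Finset.sum_le_sum_of_subset (Finset.subset_univ A)
      have h3 : ∑ r ∈ A, cap r ≤ R := by
        have hsub : A ⊆ Finset.univ.erase r₀ := by
          intro r hr
          rw [hAdef, Finset.mem_filter] at hr
          exact Finset.mem_erase.mpr ⟨hr.2.1, Finset.mem_univ r⟩
        have h4 := Finset.sum_le_sum_of_subset (f := cap) hsub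
        have h5 : ∑ r ∈ Finset.univ.erase r₀, cap r + cap r₀ = R + 1 := by
          rw [Finset.sum_erase_add _ _ (Finset.mem_univ r₀), hcap]
        omega
      have h6 : ∑ r ∈ A, (D r + cap r) = ∑ r ∈ A, D r + ∑ r ∈ A, cap r :=
        Finset.sum_add_distrib
      by_contra hgt
      push_neg at hgt
      have h8 : (k+1) * (R+1) ≤ A.card * (R+1) := Nat.mul_le_mul_right _ hgt
      have h9 : (k+1)*(R+1) = k*(R+1) + R + 1 := by ring
      omega
    have hPcard : k ≤ P.card := by
      by_contra hlt
      push_neg at hlt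
      have hr₀P : r₀ ∉ P := by rw [hPdef]; simp
      have hzero : ∀ r ∈ Finset.univ, r ∉ insert r₀ P → D r = 0 := by
        intro r _ hri
        rw [Finset.mem_insert] at hri
        push_neg at hri
        obtain ⟨h1, h2⟩ := hri
        rw [hPdef, Finset.mem_filter] at h2
        push_neg at h2
        have := h2 (Finset.mem_univ r) h1
        omega
      have hsplit : ∑ r ∈ insert r₀ P, D r = k * (R+1) := by
        rw [← hD]
        exact Finset.sum_subset (Finset.subset_univ _) hzero
      rw [Finset.sum_insert hr₀P] at hsplit
      have hD0 : D r₀ ≤ R := by have := hle r₀; omega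
      have hbd : ∑ r ∈ P, D r ≤ P.card * (R+1) := by
        have h := Finset.sum_le_card_nsmul P D (R+1) (fun r _ => by have := hle r; omega)
        simpa [smul_eq_mul] using h
      have h1 : (P.card + 1) * (R+1) ≤ k * (R+1) := Nat.mul_le_mul_right _ hlt
      have h2 : (P.card + 1) * (R+1) = P.card * (R+1) + R + 1 := by ring
      omega
    obtain ⟨S, hAS, hSP, hScard⟩ :=
      Finset.exists_subsuperset_card_eq hAP hAcard hPcard
    have hSr₀ : r₀ ∉ S := fun h => by
      have h2 := hSP h; rw [hPdef, Finset.mem_filter] at h2; exact h2.2.1 rfl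
    have hSpos : ∀ r ∈ S, 1 ≤ D r := fun r h => by
      have h2 := hSP h; rw [hPdef, Finset.mem_filter] at h2; exact h2.2.2
    set cap' : Fin q → ℕ := fun r => cap r - (if r = r₀ then 1 else 0) with hcap'def
    set D' : Fin q → ℕ := fun r => D r - (if r ∈ S then 1 else 0) with hD'def
    have hcap'r₀ : cap' r₀ = cap r₀ - 1 := by
      simp [hcap'def]
    have hcap'ne : ∀ r, r ≠ r₀ → cap' r = cap r := by
      intro r h; simp [hcap'def, h]
    have hcap'sum : ∑ r, cap' r = R := by
      have h1 : ∑ r, (cap' r + (if r = r₀ then 1 else 0)) = ∑ r, cap r := by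
        refine Finset.sum_congr rfl fun r _ => ?_
        by_cases h : r = r₀
        · subst h; simp [hcap'def]; omega
        · simp [hcap'def, h]
      rw [Finset.sum_add_distrib] at h1
      have h2 : ∑ r : Fin q, (if r = r₀ then 1 else 0) = 1 := by
        rw [Finset.sum_ite_eq' Finset.univ r₀ (fun _ => 1)]; simp
      omega
    have hD'sum : ∑ r, D' r = k * R := by
      have h1 : ∑ r, (D' r + (if r ∈ S then 1 else 0)) = ∑ r, D r := by
        refine Finset.sum_congr rfl fun r _ => ?_
        by_cases h : r ∈ S
        · have := hSpos r h; simp only [hD'def, if_pos h]; omega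
        · simp [hD'def, h]
      rw [Finset.sum_add_distrib] at h1
      have h2 : ∑ r : Fin q, (if r ∈ S then 1 else 0) = S.card := by
        rw [Finset.sum_boole]
        simp
      have h3 : k * (R+1) = k * R + k := by ring
      omega
    have hle' : ∀ r, D' r + cap' r ≤ R := by
      intro r
      by_cases h0 : r = r₀
      · have h1 := hle r₀
        have h2 : D' r = D r := by simp [hD'def, h0 ▸ hSr₀]
        have h3 : cap' r = cap r - 1 := by simp [hcap'def, h0]
        rw [h2, h3, h0]
        rw [h0] at *
        omega
      · by_cases hS : r ∈ S
        · have h1 := hSpos r hS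
          have h2 := hle r
          simp only [hD'def, hcap'def, if_pos hS, if_neg h0]
          omega
        · have hA : r ∉ A := fun h => hS (hAS h)
          rw [hAdef, Finset.mem_filter] at hA
          push_neg at hA
          have h4 := hA (Finset.mem_univ r) h0
          have h5 := hle r
          simp only [hD'def, hcap'def, if_neg hS, if_neg h0]
          omega
    obtain ⟨Ψ', hΨ'1, hΨ'2⟩ := ih cap' D' hcap'sum hD'sum hle'
    obtain ⟨c₀, hc₀⟩ : ∃ c', cap r₀ = c' + 1 := ⟨cap r₀ - 1, by omega⟩
    have hcap'r₀' : cap' r₀ = c₀ := by rw [hcap'r₀, hc₀]; omega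
    refine ⟨fun r c => if r = r₀ ∧ c = c₀ then S else Ψ' r c, ?_, ?_⟩
    · intro r' c hc
      dsimp only
      by_cases h : r' = r₀ ∧ c = c₀
      · rw [if_pos h]
        exact ⟨hScard, h.1 ▸ hSr₀⟩
      · rw [if_neg h]
        apply hΨ'1
        by_cases h' : r' = r₀
        · have hcc : c ≠ c₀ := fun hcc => h ⟨h', hcc⟩
          rw [h', hcap'r₀']
          rw [h', hc₀] at hc
          omega
        · rw [hcap'ne r' h']
          omega
    · intro r
      simp only
      have hsplit : ∀ r', r' ≠ r₀ →
          ((Finset.range (cap r')).filter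
            (fun c => r ∈ (if r' = r₀ ∧ c = c₀ then S else Ψ' r' c))).card
          = ((Finset.range (cap' r')).filter (fun c => r ∈ Ψ' r' c)).card := by
        intro r' h
        rw [hcap'ne r' h]
        congr 1
        refine Finset.filter_congr fun c _ => ?_
        rw [if_neg (fun hh => h hh.1)]
      have hr₀term :
          ((Finset.range (cap r₀)).filter
            (fun c => r ∈ (if r₀ = r₀ ∧ c = c₀ then S else Ψ' r₀ c))).card
          = ((Finset.range (cap' r₀)).filter (fun c => r ∈ Ψ' r₀ c)).card
            + (if r ∈ S then 1 else 0) := by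
        rw [hc₀, hcap'r₀', Finset.range_add_one, Finset.filter_insert]
        have h4 : (Finset.range c₀).filter
              (fun c => r ∈ (if r₀ = r₀ ∧ c = c₀ then S else Ψ' r₀ c))
            = (Finset.range c₀).filter (fun c => r ∈ Ψ' r₀ c) := by
          refine Finset.filter_congr fun c hc => ?_
          rw [Finset.mem_range] at hc
          rw [if_neg (fun hh => by omega)]
        have h5 : (if r₀ = r₀ ∧ c₀ = c₀ then S else Ψ' r₀ c₀) = S := if_pos ⟨rfl, rfl⟩
        by_cases hrS : r ∈ S
        · rw [if_pos (by rw [h5]; exact hrS)]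
          rw [Finset.card_insert_of_notMem (by simp)]
          rw [h4, if_pos hrS]
        · rw [if_neg (by rw [h5]; exact hrS)]
          rw [h4, if_neg hrS]
          omega
      have hgoal := hΨ'2 r
      rw [← Finset.sum_erase_add _ _ (Finset.mem_univ r₀)] at hgoal ⊢
      have hE : ∑ r' ∈ Finset.univ.erase r₀,
            ((Finset.range (cap r')).filter
              (fun c => r ∈ (if r' = r₀ ∧ c = c₀ then S else Ψ' r' c))).card
          = ∑ r' ∈ Finset.univ.erase r₀,
            ((Finset.range (cap' r')).filter (fun c => r ∈ Ψ' r' c)).card :=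
        Finset.sum_congr rfl fun r' hr' => hsplit r' (Finset.mem_erase.mp hr').1
      rw [hE, hr₀term]
      by_cases hrS : r ∈ S
      · have h1 := hSpos r hrS
        have h2 : D' r = D r - 1 := by simp [hD'def, hrS]
        rw [if_pos hrS]
        omega
      · have h2 : D' r = D r := by simp [hD'def, hrS]
        rw [if_neg hrS]
        omega

end AuxiliaryLemmas


/-- Auxiliary coloring function for the GLS block graph. -/
private noncomputable def glsColor (n k B : ℕ) (a : Fin n → ℕ)
    (Ψ : Fin (n+2) → ℕ → Finset (Fin (n+2)))
    (hc : ∀ (i : Fin (n+1)) (c : ℕ), (Ψ i.castSucc c).card = k) :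
    GLSV n k B a → Fin (n+2)
  | ⟨i, none⟩ => i.castSucc
  | ⟨i, some cp⟩ => (Ψ i.castSucc (cp.1 : ℕ)).orderEmbOfFin (hc i (cp.1 : ℕ)) cp.2

theorem gls_equitable_n_add_two (n k B : ℕ) (hn : 1 ≤ n) (hk : 1 ≤ k) (hkn : k ≤ n)
    (hB : 1 ≤ B) (a : Fin n → ℕ) (ha : ∀ i, 1 ≤ a i ∧ a i ≤ B)
    (hsum : ∑ i, a i = k * B) :
    ∃ c : GLSV n k B a → Fin (n + 2), IsEquitableColoring (GLSGraph n k B a) c := by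
  classical
  have hP0 : glsPar n B a 0 = B := rfl
  have hPsucc : ∀ j : Fin n, glsPar n B a j.succ = a j := fun j => by
    simp [glsPar]
  have hPB : ∀ i, glsPar n B a i ≤ B := by
    intro i
    induction i using Fin.cases with
    | zero => rw [hP0]
    | succ j => rw [hPsucc]; exact (ha j).2
  set M : ℕ := k * B + B + n + 1 with hMdef
  set cap : Fin (n+2) → ℕ :=
    fun r => if h : r.val < n + 1 then glsPar n B a ⟨r.val, h⟩ + 1 else 0 with hcapdef
  have cap_cast : ∀ i : Fin (n+1), cap i.castSucc = glsPar n B a i + 1 := by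
    intro i
    have h1 : (i.castSucc : Fin (n+2)).val = i.val := rfl
    rw [hcapdef]
    simp only [h1, i.isLt, dif_pos, Fin.eta]
  have cap_last : cap (Fin.last (n+1)) = 0 := by
    rw [hcapdef]
    simp
  have hcapsum : ∑ r, cap r = M := by
    rw [Fin.sum_univ_castSucc (f := cap), cap_last, add_zero]
    have h1 : ∑ i : Fin (n+1), cap i.castSucc = ∑ i : Fin (n+1), (glsPar n B a i + 1) :=
      Finset.sum_congr rfl fun i _ => cap_cast i
    rw [h1, Fin.sum_univ_succ, hP0]
    have h2 : ∑ j : Fin n, (glsPar n B a j.succ + 1) = ∑ j : Fin n, (a j + 1) :=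
      Finset.sum_congr rfl fun j _ => by rw [hPsucc]
    rw [h2, Finset.sum_add_distrib, hsum]
    simp [hMdef]
    omega
  set N : ℕ := k * M + (n + 1) with hNdef
  set m : ℕ := N / (n + 2) with hmdef
  set R0 : ℕ := N % (n + 2) with hR0def
  have hR0lt : R0 < n + 2 := Nat.mod_lt _ (by omega)
  have hdm : (n+2) * m + R0 = N := Nat.div_add_mod N (n+2)
  have hMpos : 1 ≤ M := by omega
  have hm1 : 1 ≤ m := by
    have h1 : 1 ≤ k * M := Nat.one_le_iff_ne_zero.mpr (Nat.mul_ne_zero (by omega) (by omega))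
    have h2 : n + 2 ≤ N := by omega
    rw [hmdef]
    exact (Nat.one_le_div_iff (by omega)).mpr h2
  have hmle : m + (B + 1) ≤ M := by
    have e1 : k*(k*B) ≤ n*(k*B) := Nat.mul_le_mul_right _ hkn
    have e2 : k*n ≤ n*n := Nat.mul_le_mul_right _ hkn
    have e3 : k*1 ≤ k*B := Nat.mul_le_mul_left _ hB
    have hNle : N ≤ (n+2) * (k*B + n) := by
      rw [hNdef, hMdef]
      nlinarith [e1, e2, e3]
    have h4 : m ≤ k*B + n := by
      rw [hmdef]
      calc N / (n+2) ≤ ((n+2) * (k*B+n)) / (n+2) := Nat.div_le_div_right hNle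
        _ = k*B + n := Nat.mul_div_cancel_left _ (by omega)
    omega
  set DD : Fin (n+2) → ℕ :=
    fun r => (m - 1) + (if r.val < R0 then 1 else 0) + (if r.val = n+1 then 1 else 0) with hDDdef
  have hDDsum : ∑ r, DD r = k * M := by
    have h1 : ∑ r : Fin (n+2), DD r = (n+2)*(m-1) + R0 + 1 := by
      rw [hDDdef]
      rw [Finset.sum_add_distrib, Finset.sum_add_distrib]
      rw [Finset.sum_const, Finset.card_univ, Fintype.card_fin, smul_eq_mul]
      rw [sum_fin_ite_lt (n+2) R0 (by omega), sum_fin_ite_eq (n+2) (n+1) (by omega)]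
    have h3 : (n+2)*(m-1) + (n+2) = (n+2)*m := by
      have h4 : m - 1 + 1 = m := by omega
      calc (n+2)*(m-1) + (n+2) = (n+2)*((m-1)+1) := by ring
        _ = (n+2)*m := by rw [h4]
    omega
  have hDDcap : ∀ r, DD r + cap r ≤ M := by
    intro r
    by_cases hr : r.val < n + 1
    · have hcapr : cap r = glsPar n B a ⟨r.val, hr⟩ + 1 := by
        rw [hcapdef]; simp only [hr, dif_pos]
      have hPb := hPB ⟨r.val, hr⟩
      have hne : ¬ (r.val = n+1) := by omega
      rw [hDDdef]
      simp only [if_neg hne]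
      have h5 : (if r.val < R0 then 1 else 0) ≤ 1 := by split <;> omega
      omega
    · have hrval : r.val = n + 1 := by have := r.isLt; omega
      have hcap0 : cap r = 0 := by rw [hcapdef]; simp only [hr, dif_neg, not_false_iff]
      have h1 : ¬ (r.val < R0) := by omega
      rw [hDDdef]
      simp only [if_neg h1, if_pos hrval, hcap0]
      omega
  obtain ⟨Ψ₀, hΨ₀1, hΨ₀2⟩ := greedy k (n+2) M cap DD hcapsum hDDsum hDDcap
  -- pad Ψ₀ so that the card/not-mem properties hold everywhere
  have hpad : ∀ r : Fin (n+2), ∃ T : Finset (Fin (n+2)), T.card = k ∧ r ∉ T := by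
    intro r
    have hcu : k ≤ (Finset.univ.erase r).card := by
      rw [Finset.card_erase_of_mem (Finset.mem_univ r), Finset.card_univ, Fintype.card_fin]
      omega
    obtain ⟨T, hTsub, hTcard⟩ := Finset.exists_subset_card_eq hcu
    exact ⟨T, hTcard, fun h => (Finset.mem_erase.mp (hTsub h)).1 rfl⟩
  choose pad hpad1 hpad2 using hpad
  set Ψ : Fin (n+2) → ℕ → Finset (Fin (n+2)) :=
    fun r c => if (Ψ₀ r c).card = k ∧ r ∉ Ψ₀ r c then Ψ₀ r c else pad r with hΨdef
  have hΨcard : ∀ (r : Fin (n+2)) (c : ℕ), (Ψ r c).card = k := by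
    intro r c
    simp only [hΨdef]
    by_cases h : (Ψ₀ r c).card = k ∧ r ∉ Ψ₀ r c
    · rw [if_pos h]; exact h.1
    · rw [if_neg h]; exact hpad1 r
  have hΨnm : ∀ (r : Fin (n+2)) (c : ℕ), r ∉ Ψ r c := by
    intro r c
    simp only [hΨdef]
    by_cases h : (Ψ₀ r c).card = k ∧ r ∉ Ψ₀ r c
    · rw [if_pos h]; exact h.2
    · rw [if_neg h]; exact hpad2 r
  have hΨeq : ∀ (r : Fin (n+2)) (c : ℕ), c < cap r → Ψ r c = Ψ₀ r c := by
    intro r c hc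
    simp only [hΨdef]
    rw [if_pos (hΨ₀1 r c hc)]
  have hΨ2 : ∀ r, (∑ r₀, ((Finset.range (cap r₀)).filter (fun c => r ∈ Ψ r₀ c)).card) = DD r := by
    intro r
    rw [← hΨ₀2 r]
    refine Finset.sum_congr rfl fun r₀ _ => ?_
    congr 1
    refine Finset.filter_congr fun c hc => ?_
    rw [Finset.mem_range] at hc
    rw [hΨeq r₀ c hc]
  have hcK : ∀ (i : Fin (n+1)) (c : ℕ), (Ψ i.castSucc c).card = k := fun i c => hΨcard _ c
  set col : GLSV n k B a → Fin (n+2) := glsColor n k B a Ψ hcK with hcoldef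
  have col_none : ∀ i : Fin (n+1), col ⟨i, none⟩ = i.castSucc := fun i => rfl
  have col_some : ∀ (i : Fin (n+1)) (cp : Fin (glsPar n B a i + 1) × Fin k),
      col ⟨i, some cp⟩ = (Ψ i.castSucc (cp.1 : ℕ)).orderEmbOfFin (hcK i (cp.1 : ℕ)) cp.2 :=
    fun i cp => rfl
  -- properness
  have key : ∀ (u v : GLSV n k B a), u ≠ v →
      ((u.1 = v.1 ∧ (u.2 = none ∨ v.2 = none ∨ ∃ c : ℕ,
          u.2.map (fun p => (p.1 : ℕ)) = some c ∧ v.2.map (fun p => (p.1 : ℕ)) = some c)) ∨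
        (u.2 = none ∧ v.2 = none ∧ (u.1 = 0 ∨ v.1 = 0))) →
      col u ≠ col v := by
    rintro ⟨i, o⟩ ⟨i', o'⟩ hne h
    rcases h with ⟨h1, h2⟩ | ⟨h1, h2, -⟩
    · dsimp only at h1 h2
      subst h1
      rcases h2 with h2 | h2 | ⟨cc, hc1, hc2⟩
      · subst h2
        cases o' with
        | none => exact absurd rfl hne
        | some cp =>
          rw [col_none, col_some]
          intro hEq
          have hmem := Finset.orderEmbOfFin_mem (Ψ i.castSucc (cp.1:ℕ)) (hcK i (cp.1:ℕ)) cp.2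
          rw [← hEq] at hmem
          exact hΨnm i.castSucc (cp.1 : ℕ) hmem
      · subst h2
        cases o with
        | none => exact absurd rfl hne
        | some cp =>
          rw [col_none, col_some]
          intro hEq
          have hmem := Finset.orderEmbOfFin_mem (Ψ i.castSucc (cp.1:ℕ)) (hcK i (cp.1:ℕ)) cp.2
          rw [hEq] at hmem
          exact hΨnm i.castSucc (cp.1 : ℕ) hmem
      · cases o with
        | none => simp at hc1
        | some cp =>
          cases o' with
          | none => simp at hc2
          | some cp' =>
            simp only [Option.map_some] at hc1 hc2
            obtain ⟨c1, p1⟩ := cp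
            obtain ⟨c1', p1'⟩ := cp'
            have hcc1 : (c1 : ℕ) = cc := by injection hc1
            have hcc2 : (c1' : ℕ) = cc := by injection hc2
            have hcEq : c1 = c1' := Fin.ext (by omega)
            subst hcEq
            have hp : p1 ≠ p1' := by
              intro hpe
              exact hne (by rw [hpe])
            rw [col_some i (c1, p1), col_some i (c1, p1')]
            intro hEq
            exact hp (((Ψ i.castSucc (c1 : ℕ)).orderEmbOfFin (hcK i (c1:ℕ))).injective hEq)
    · dsimp only at h1 h2
      subst h1
      subst h2
      have hii : i ≠ i' := fun h => hne (by rw [h])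
      rw [col_none, col_none]
      intro hEq
      exact hii (Fin.castSucc_injective _ hEq)
  have hproper : IsProperColoring (GLSGraph n k B a) col := by
    intro u v hadj
    have hadj' := (SimpleGraph.fromRel_adj _ u v).mp hadj
    obtain ⟨hne, h | h⟩ := hadj'
    · exact key u v hne h
    · exact (key v u (Ne.symm hne) h).symm
  -- counting the color classes
  have class_card : ∀ r : Fin (n+2),
      {v | col v = r}.ncard = DD r + (if r.val < n+1 then 1 else 0) := by
    intro r
    have hset : {v | col v = r} = ↑(Finset.univ.filter (fun v => col v = r)) := by
      ext v; simp
    rw [hset, Set.ncard_coe_finset, Finset.card_filter]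
    rw [← Finset.univ_sigma_univ, Finset.sum_sigma]
    have hopt : ∀ i : Fin (n+1),
        (∑ o : Option (Fin (glsPar n B a i + 1) × Fin k), if col ⟨i, o⟩ = r then 1 else 0)
        = (if i.castSucc = r then 1 else 0)
          + ((Finset.range (cap i.castSucc)).filter (fun c => r ∈ Ψ i.castSucc c)).card := by
      intro i
      rw [Fintype.sum_option]
      congr 1
      rw [Fintype.sum_prod_type]
      have h1 : ∀ (c : Fin (glsPar n B a i + 1)),
          (∑ p : Fin k, if col ⟨i, some (c, p)⟩ = r then 1 else 0)
          = (if r ∈ Ψ i.castSucc (c:ℕ) then 1 else 0) := by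
        intro c
        calc (∑ p : Fin k, if col ⟨i, some (c, p)⟩ = r then 1 else 0)
            = ∑ p : Fin k,
                if (Ψ i.castSucc (c:ℕ)).orderEmbOfFin (hcK i (c:ℕ)) p = r then 1 else 0 := by
              refine Finset.sum_congr rfl fun p _ => by rw [col_some i (c, p)]
          _ = if r ∈ Ψ i.castSucc (c:ℕ) then 1 else 0 := sum_ite_emb _ _ r
      rw [Finset.sum_congr rfl (fun c _ => h1 c)]
      rw [Fin.sum_univ_eq_sum_range (fun c => if r ∈ Ψ i.castSucc c then 1 else 0)
        (glsPar n B a i + 1)]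
      rw [← Finset.card_filter, cap_cast i]
    rw [Finset.sum_congr rfl (fun i _ => hopt i), Finset.sum_add_distrib]
    have hy : (∑ i : Fin (n+1), if i.castSucc = r then 1 else 0)
        = (if r.val < n+1 then 1 else 0) := by
      by_cases hr : r.val < n+1
      · rw [if_pos hr]
        rw [Finset.sum_eq_single (⟨r.val, hr⟩ : Fin (n+1))]
        · rw [if_pos (by apply Fin.ext; simp)]
        · intro i _ hne
          rw [if_neg]
          intro hEq
          apply hne
          apply Fin.ext
          have hh : i.castSucc.val = r.val := by rw [hEq]
          simpa using hh
        · intro h; exact absurd (Finset.mem_univ _) h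
      · rw [if_neg hr]
        refine Finset.sum_eq_zero fun i _ => ?_
        rw [if_neg]
        intro hEq
        apply hr
        rw [← hEq]
        exact i.isLt
    have hcopy : (∑ i : Fin (n+1),
          ((Finset.range (cap i.castSucc)).filter (fun c => r ∈ Ψ i.castSucc c)).card) = DD r := by
      have h := hΨ2 r
      rw [Fin.sum_univ_castSucc
        (f := fun r₀ => ((Finset.range (cap r₀)).filter (fun c => r ∈ Ψ r₀ c)).card)] at h
      rw [cap_last] at h
      simpa using h
    rw [hy, hcopy]
    omega
  -- class sizes are m or m+1
  have hclass : ∀ r : Fin (n+2),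
      {v | col v = r}.ncard = m + (if r.val < R0 then 1 else 0) := by
    intro r
    rw [class_card r]
    by_cases hr : r.val < n+1
    · have hne : ¬(r.val = n+1) := by omega
      simp only [hDDdef, if_neg hne, if_pos hr]
      omega
    · have hrv : r.val = n+1 := by have := r.isLt; omega
      have h1 : ¬ (r.val < R0) := by omega
      simp only [hDDdef, if_pos hrv, if_neg hr, if_neg h1]
      omega
  refine ⟨col, hproper, fun i j => ?_⟩
  rw [hclass i, hclass j]
  have h1 : (if (i:ℕ) < R0 then 1 else 0) ≤ 1 := by split <;> omega
  have h2 : (0:ℕ) ≤ (if (j:ℕ) < R0 then 1 else 0) := by omega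
  omega

end BlockGraphPaper
end
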